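/- arXiv:1412.3605 — 20 statements merged into one kernel-verified Lean document; each statement's English description precedes it below -/
import Mathlib

section
/- For every divisor D ∈ ℚ^s, the set of integral antinef divisors D' with D' ≥ D (entrywise) is nonempty and has a least element D̃ with respect to the entrywise order; in particular D̃ is the unique integral antinef divisor ≥ D such that every integral antinef divisor D' ≥ D satisfies D' ≥ D̃ (D̃ is called the antinef closure of D). -/
open scoped BigOperators

/-- Intersection `D · E i` of an integral divisor `D` with the `i`-th component. -/
def interZ {s : ℕ} (N : Matrix (Fin s) (Fin s) ℤ) (D : Fin s → ℤ) (i : Fin s) : ℤ :=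
  ∑ j, D j * N j i

/-- An integral divisor is antinef if it intersects every exceptional component
nonpositively. -/
def Antinef {s : ℕ} (r : ℕ) (N : Matrix (Fin s) (Fin s) ℤ) (D : Fin s → ℤ) : Prop :=
  ∀ i : Fin s, (i : ℕ) < r → interZ N D i ≤ 0

/-- `Dt` is the antinef closure of the rational divisor `D`: the least integral antinef
divisor lying entrywise above `D`. -/
def IsAntinefClosure {s : ℕ} (r : ℕ) (N : Matrix (Fin s) (Fin s) ℤ)
    (D : Fin s → ℚ) (Dt : Fin s → ℤ) : Prop :=
  Antinef r N Dt ∧ (∀ i, D i ≤ (Dt i : ℚ)) ∧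
    ∀ D' : Fin s → ℤ, Antinef r N D' → (∀ i, D i ≤ (D' i : ℚ)) → ∀ i, Dt i ≤ D' i

section Aux

variable {s : ℕ} {r : ℕ} {N : Matrix (Fin s) (Fin s) ℤ}

lemma antinef_min (hoff : ∀ i j : Fin s, i ≠ j → 0 ≤ N i j)
    {A B : Fin s → ℤ} (hA : Antinef r N A) (hB : Antinef r N B) :
    Antinef r N (fun j => min (A j) (B j)) := by
  intro i hi
  rcases le_total (A i) (B i) with h | h
  · refine le_trans (le_trans (Finset.sum_le_sum (fun j _ => ?_)) le_rfl) (hA i hi)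
    by_cases hj : j = i
    · subst hj; simp [min_eq_left h]
    · exact mul_le_mul_of_nonneg_right (min_le_left _ _) (hoff j i hj)
  · refine le_trans (le_trans (Finset.sum_le_sum (fun j _ => ?_)) le_rfl) (hB i hi)
    by_cases hj : j = i
    · subst hj; simp [min_eq_right h]
    · exact mul_le_mul_of_nonneg_right (min_le_right _ _) (hoff j i hj)

/-- Extension by zero of a vector supported on exceptional indices. -/
def extQ (r : ℕ) {s : ℕ} (x : {i : Fin s // (i : ℕ) < r} → ℚ) : Fin s → ℚ :=
  fun i => if h : (i : ℕ) < r then x ⟨i, h⟩ else 0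

lemma sum_extQ (x : {i : Fin s // (i : ℕ) < r} → ℚ) (f : Fin s → ℚ) :
    ∑ i, extQ r x i * f i = ∑ a : {i : Fin s // (i : ℕ) < r}, x a * f a.1 := by
  classical
  rw [← Fintype.sum_subtype_add_sum_subtype (fun i : Fin s => (i : ℕ) < r)
    (fun i => extQ r x i * f i)]
  have h2 : ∑ a : {i : Fin s // ¬ (i : ℕ) < r}, extQ r x a.1 * f a.1 = 0 := by
    apply Finset.sum_eq_zero
    intro a _
    simp [extQ, dif_neg a.2]
  rw [h2, add_zero]
  apply Finset.sum_congr rfl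
  intro a _
  simp [extQ, dif_pos a.2]

end Aux

section Core

variable {s : ℕ} {r : ℕ} {N : Matrix (Fin s) (Fin s) ℤ}

/-- There is a nonnegative rational vector supported on the exceptional part whose
intersection with every exceptional component is `-1`. -/
lemma exists_neg_one_vec
    (hsym : ∀ i j, N i j = N j i)
    (hoff : ∀ i j : Fin s, i ≠ j → 0 ≤ N i j)
    (hneg : ∀ x : Fin s → ℚ, (∀ i : Fin s, r ≤ (i : ℕ) → x i = 0) → x ≠ 0 →
      (∑ i, ∑ j, x i * x j * (N i j : ℚ)) < 0) :
    ∃ Z : Fin s → ℚ, (∀ j, 0 ≤ Z j) ∧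
      ∀ i : Fin s, (i : ℕ) < r → (∑ j, Z j * (N j i : ℚ)) = -1 := by
  classical
  set ι := {i : Fin s // (i : ℕ) < r}
  set B : Matrix ι ι ℚ := fun a b => -(N a.1 b.1 : ℚ) with hB
  -- positivity of the quadratic form of B
  have qpos : ∀ x : ι → ℚ, x ≠ 0 → 0 < ∑ a, ∑ b, x a * x b * B a b := by
    intro x hx
    have hX0 : ∀ i : Fin s, r ≤ (i : ℕ) → extQ r x i = 0 := by
      intro i hi; simp [extQ, dif_neg (not_lt.mpr hi)]
    have hXne : extQ r x ≠ 0 := by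
      intro h
      apply hx
      funext a
      have := congrFun h a.1
      simpa [extQ, dif_pos a.2] using this
    have h1 := hneg (extQ r x) hX0 hXne
    have h2 : ∑ i, ∑ j, extQ r x i * extQ r x j * (N i j : ℚ)
        = ∑ a : ι, ∑ b : ι, x a * x b * (N a.1 b.1 : ℚ) := by
      have e1 : ∀ i, ∑ j, extQ r x i * extQ r x j * (N i j : ℚ)
          = extQ r x i * ∑ j, extQ r x j * (N i j : ℚ) := by
        intro i; rw [Finset.mul_sum]; apply Finset.sum_congr rfl; intros; ring
      simp_rw [e1]
      rw [sum_extQ x (fun i => ∑ j, extQ r x j * (N i j : ℚ))]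
      apply Finset.sum_congr rfl
      intro a _
      rw [sum_extQ x (fun j => (N a.1 j : ℚ)), Finset.mul_sum]
      apply Finset.sum_congr rfl; intros; ring
    rw [h2] at h1
    have h3 : ∑ a : ι, ∑ b : ι, x a * x b * B a b
        = -∑ a : ι, ∑ b : ι, x a * x b * (N a.1 b.1 : ℚ) := by
      rw [← Finset.sum_neg_distrib]
      apply Finset.sum_congr rfl; intro a _
      rw [← Finset.sum_neg_distrib]
      apply Finset.sum_congr rfl; intro b _
      simp [hB]
    rw [h3]
    linarith
  -- B is invertible, solve B w = 1
  have hinj : Function.Injective B.mulVecLin := by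
    rw [← LinearMap.ker_eq_bot, LinearMap.ker_eq_bot']
    intro x hx0
    by_contra hx
    have h0 : ∑ a, x a * (B.mulVec x) a = 0 := by
      have : B.mulVec x = 0 := hx0
      simp [this]
    have h1 : ∑ a, x a * (B.mulVec x) a = ∑ a, ∑ b, x a * x b * B a b := by
      apply Finset.sum_congr rfl
      intro a _
      rw [Matrix.mulVec, dotProduct, Finset.mul_sum]
      apply Finset.sum_congr rfl; intros; ring
    have := qpos x hx
    rw [← h1] at this
    linarith [h0]
  have hsurj : Function.Surjective B.mulVecLin :=
    (LinearMap.injective_iff_surjective).mp hinj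
  obtain ⟨w, hw⟩ := hsurj (fun _ => 1)
  have hw' : ∀ a : ι, B.mulVec w a = 1 := by
    intro a; exact congrFun hw a
  -- w is nonnegative
  have hwpos : ∀ a : ι, 0 ≤ w a := by
    by_contra hcon
    push_neg at hcon
    obtain ⟨a0, ha0⟩ := hcon
    set u : ι → ℚ := fun a => max (-(w a)) 0 with hu
    set p : ι → ℚ := fun a => max (w a) 0 with hp
    have hupos : ∀ a, 0 ≤ u a := fun a => le_max_right _ _
    have hppos : ∀ a, 0 ≤ p a := fun a => le_max_right _ _
    have hwsplit : ∀ a, w a = p a - u a := by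
      intro a; simp [hu, hp, max_zero_sub_max_neg_zero_eq_self]
    have hune : u ≠ 0 := by
      intro h
      have := congrFun h a0
      simp [hu] at this
      linarith
    have t1 : ∑ a, u a * (B.mulVec w) a = ∑ a, u a := by
      apply Finset.sum_congr rfl; intro a _; rw [hw' a, mul_one]
    have t2 : 0 ≤ ∑ a, u a := Finset.sum_nonneg (fun a _ => hupos a)
    have t3 : ∑ a, u a * (B.mulVec w) a
        = (∑ a, ∑ b, u a * B a b * p b) - ∑ a, ∑ b, u a * u b * B a b := by
      rw [← Finset.sum_sub_distrib]
      apply Finset.sum_congr rfl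
      intro a _
      rw [Matrix.mulVec, dotProduct, Finset.mul_sum, ← Finset.sum_sub_distrib]
      apply Finset.sum_congr rfl
      intro b _
      rw [hwsplit b]; ring
    have t4 : (∑ a, ∑ b, u a * B a b * p b) ≤ 0 := by
      apply Finset.sum_nonpos
      intro a _
      apply Finset.sum_nonpos
      intro b _
      by_cases hab : a = b
      · subst hab
        rcases le_total (w a) 0 with h | h
        · have : p a = 0 := by simp [hp, max_eq_right h]
          simp [this]
        · have : u a = 0 := by simp [hu]; linarith
          simp [this]
      · have hBab : B a b ≤ 0 := by
          simp only [hB, neg_nonpos]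
          exact_mod_cast hoff a.1 b.1 (fun h => hab (Subtype.ext h))
        have := mul_nonneg (hupos a) (hppos b)
        nlinarith
    have t5 : 0 < ∑ a, ∑ b, u a * u b * B a b := qpos u hune
    rw [t1] at t3
    linarith
  -- package
  refine ⟨extQ r w, ?_, ?_⟩
  · intro j
    by_cases h : (j : ℕ) < r
    · simp only [extQ, dif_pos h]; exact hwpos _
    · simp [extQ, dif_neg h]
  · intro i hi
    rw [sum_extQ w (fun j => (N j i : ℚ))]
    have : ∑ a : ι, w a * (N a.1 i : ℚ) = -(B.mulVec w ⟨i, hi⟩) := by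
      rw [Matrix.mulVec, dotProduct, ← Finset.sum_neg_distrib]
      apply Finset.sum_congr rfl
      intro b _
      simp [hB, hsym b.1 i]
      ring
    rw [this, hw' ⟨i, hi⟩]

end Core

section Build

variable {s : ℕ} {r : ℕ} {N : Matrix (Fin s) (Fin s) ℤ}

/-- Integer version: a nonnegative integral vector with exceptional intersections ≤ -1. -/
lemma exists_neg_vec_int
    (hsym : ∀ i j, N i j = N j i)
    (hoff : ∀ i j : Fin s, i ≠ j → 0 ≤ N i j)
    (hneg : ∀ x : Fin s → ℚ, (∀ i : Fin s, r ≤ (i : ℕ) → x i = 0) → x ≠ 0 →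
      (∑ i, ∑ j, x i * x j * (N i j : ℚ)) < 0) :
    ∃ z : Fin s → ℤ, (∀ j, 0 ≤ z j) ∧
      ∀ i : Fin s, (i : ℕ) < r → interZ N z i ≤ -1 := by
  classical
  obtain ⟨Z, hZ0, hZ⟩ := exists_neg_one_vec hsym hoff hneg
  set d : ℕ := ∏ j, (Z j).den with hd
  have hdpos : 0 < d := Finset.prod_pos (fun j _ => (Z j).pos)
  have hdvd : ∀ j, (Z j).den ∣ d := fun j => Finset.dvd_prod_of_mem _ (Finset.mem_univ j)
  set z : Fin s → ℤ := fun j => (Z j).num * ((d / (Z j).den : ℕ) : ℤ) with hz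
  have hcast : ∀ j, (z j : ℚ) = (d : ℚ) * Z j := by
    intro j
    have hden : ((Z j).den : ℚ) ≠ 0 := by
      exact_mod_cast (Z j).den_nz
    have h1 : Z j * ((Z j).den : ℚ) = ((Z j).num : ℚ) :=
      (eq_div_iff hden).mp (Rat.num_div_den (Z j)).symm
    have h2 : (((d / (Z j).den : ℕ)) : ℚ) = (d : ℚ) / ((Z j).den : ℚ) :=
      Nat.cast_div (hdvd j) hden
    have h3 : (z j : ℚ) = ((Z j).num : ℚ) * (((d / (Z j).den : ℕ)) : ℚ) := by
      rw [hz]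
      rw [Int.cast_mul, Int.cast_natCast]
    rw [h3, h2]
    field_simp
    rw [← h1]
    ring
  refine ⟨z, ?_, ?_⟩
  · intro j
    apply mul_nonneg
    · exact Rat.num_nonneg.mpr (hZ0 j)
    · positivity
  · intro i hi
    have key : ((interZ N z i : ℤ) : ℚ) = -(d : ℚ) := by
      unfold interZ
      push_cast
      have : ∀ j, (z j : ℚ) * (N j i : ℚ) = (d : ℚ) * (Z j * (N j i : ℚ)) := by
        intro j; rw [hcast j]; ring
      simp_rw [this]
      rw [← Finset.mul_sum, hZ i hi]
      ring
    have : (interZ N z i : ℤ) = -(d : ℤ) := by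
      exact_mod_cast key
    rw [this]
    omega

/-- Nonemptiness: some integral antinef divisor lies above D. -/
lemma exists_antinef_above
    (hsym : ∀ i j, N i j = N j i)
    (hoff : ∀ i j : Fin s, i ≠ j → 0 ≤ N i j)
    (hneg : ∀ x : Fin s → ℚ, (∀ i : Fin s, r ≤ (i : ℕ) → x i = 0) → x ≠ 0 →
      (∑ i, ∑ j, x i * x j * (N i j : ℚ)) < 0)
    (D : Fin s → ℚ) :
    ∃ C : Fin s → ℤ, Antinef r N C ∧ ∀ i, D i ≤ (C i : ℚ) := by
  classical
  obtain ⟨z, hz0, hz⟩ := exists_neg_vec_int hsym hoff hneg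
  set C0 : Fin s → ℤ := fun i => ⌈D i⌉ with hC0
  set M : ℤ := ∑ i, |interZ N C0 i| with hM
  have hM0 : 0 ≤ M := Finset.sum_nonneg (fun i _ => abs_nonneg _)
  have hMbig : ∀ i, interZ N C0 i ≤ M := by
    intro i
    calc interZ N C0 i ≤ |interZ N C0 i| := le_abs_self _
      _ ≤ M := Finset.single_le_sum (fun j (_ : j ∈ Finset.univ) => abs_nonneg (interZ N C0 j))
          (Finset.mem_univ i)
  refine ⟨fun i => C0 i + M * z i, ?_, ?_⟩
  · intro i hi
    have hlin : interZ N (fun j => C0 j + M * z j) i = interZ N C0 i + M * interZ N z i := by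
      unfold interZ
      rw [Finset.mul_sum, ← Finset.sum_add_distrib]
      apply Finset.sum_congr rfl
      intros; ring
    rw [hlin]
    have h1 : M * interZ N z i ≤ M * (-1) := mul_le_mul_of_nonneg_left (hz i hi) hM0
    have := hMbig i
    linarith
  · intro i
    have h1 : D i ≤ (⌈D i⌉ : ℚ) := Int.le_ceil _
    have h2 : (0 : ℤ) ≤ M * z i := mul_nonneg hM0 (hz0 i)
    have : (0 : ℚ) ≤ (M : ℚ) * (z i : ℚ) := by exact_mod_cast h2
    simp only [hC0]
    push_cast
    linarith

end Build

/-- For every rational divisor `D` the set of integral antinef divisors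
lying entrywise above `D` is nonempty and has a (unique) least element, the antinef
closure of `D`. -/
theorem antinef_closure_exists_unique
    (s r : ℕ) (hr : 1 ≤ r) (hrs : r ≤ s)
    (N : Matrix (Fin s) (Fin s) ℤ)
    (hsym : ∀ i j, N i j = N j i)
    (hoff : ∀ i j : Fin s, i ≠ j → 0 ≤ N i j)
    (hneg : ∀ x : Fin s → ℚ, (∀ i : Fin s, r ≤ (i : ℕ) → x i = 0) → x ≠ 0 →
      (∑ i, ∑ j, x i * x j * (N i j : ℚ)) < 0)
    (D : Fin s → ℚ) :
    ∃! Dt : Fin s → ℤ,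
      Antinef r N Dt ∧ (∀ i, D i ≤ (Dt i : ℚ)) ∧
        ∀ D' : Fin s → ℤ, Antinef r N D' → (∀ i, D i ≤ (D' i : ℚ)) → Dt ≤ D' := by
  classical
  have hs : 0 < s := lt_of_lt_of_le hr hrs
  haveI : Nonempty (Fin s) := ⟨⟨0, hs⟩⟩
  set S : Set (Fin s → ℤ) := {D' | Antinef r N D' ∧ ∀ i, D i ≤ (D' i : ℚ)} with hS
  obtain ⟨C, hC1, hC2⟩ := exists_antinef_above hsym hoff hneg D
  have hCS : C ∈ S := ⟨hC1, hC2⟩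
  -- coordinatewise minima are attained
  have hWq : ∀ k : Fin s, ∃ Wk : Fin s → ℤ, Wk ∈ S ∧ ∀ D' ∈ S, Wk k ≤ D' k := by
    intro k
    have hbdd : ∃ b : ℤ, ∀ n : ℤ, (∃ D' ∈ S, D' k = n) → b ≤ n := by
      refine ⟨⌈D k⌉, ?_⟩
      rintro n ⟨D', hD', rfl⟩
      exact Int.ceil_le.mpr (hD'.2 k)
    have hinh : ∃ n : ℤ, ∃ D' ∈ S, D' k = n := ⟨C k, C, hCS, rfl⟩
    obtain ⟨lb, ⟨W, hW, hWk⟩, hleast⟩ := Int.exists_least_of_bdd hbdd hinh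
    exact ⟨W, hW, fun D' hD' => by rw [hWk]; exact hleast _ ⟨D', hD', rfl⟩⟩
  choose W hWS hWmin using hWq
  -- S is closed under pointwise min
  have hmin2 : ∀ A B, A ∈ S → B ∈ S → (fun j => min (A j) (B j)) ∈ S := by
    intro A B hA hB
    refine ⟨antinef_min hoff hA.1 hB.1, fun i => ?_⟩
    have h1 := hA.2 i
    have h2 := hB.2 i
    have : ((min (A i) (B i) : ℤ) : ℚ) = min ((A i : ℚ)) ((B i : ℚ)) := by
      push_cast; ring_nf
    rw [this]
    exact le_min h1 h2
  -- S is closed under pointwise inf of nonempty finite families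
  have key : ∀ (t : Finset (Fin s)) (ht : t.Nonempty),
      (fun i => t.inf' ht (fun k => W k i)) ∈ S := by
    intro t ht
    induction ht using Finset.Nonempty.cons_induction with
    | singleton a => simpa using hWS a
    | cons a t hat ht ih =>
        have he : ∀ (H : (Finset.cons a t hat).Nonempty) (i : Fin s),
            (Finset.cons a t hat).inf' H (fun k => W k i)
              = min (W a i) (t.inf' ht fun k => W k i) := by
          intro H i
          rw [Finset.inf'_cons]
        simp only [he]
        exact hmin2 _ _ (hWS a) ih
  set Dt : Fin s → ℤ := fun i => Finset.univ.inf' Finset.univ_nonempty (fun k => W k i)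
    with hDt
  have hDtS : Dt ∈ S := key Finset.univ Finset.univ_nonempty
  have hDtmin : ∀ D' ∈ S, ∀ i, Dt i ≤ D' i := by
    intro D' hD' i
    calc Dt i ≤ W i i := Finset.inf'_le _ (Finset.mem_univ i)
      _ ≤ D' i := hWmin i D' hD'
  refine ⟨Dt, ⟨hDtS.1, hDtS.2, fun D' h1 h2 => hDtmin D' ⟨h1, h2⟩⟩, ?_⟩
  intro y hy
  funext i
  have h1 : y i ≤ Dt i := hy.2.2 Dt hDtS.1 hDtS.2 i
  have h2 : Dt i ≤ y i := hDtmin y ⟨hy.1, hy.2.1⟩ i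
  omega
end

section
/- Let D be an integral divisor and let D' := D + Σ_{i∈Θ} n_i·E_i be the result of one unloading step applied to D. Then D ≤ D' ≤ D̃, and D' has the same antinef closure as D. -/
open scoped BigOperators

/-- One unloading step: on every exceptional index with negative excess
(`0 < D · E i`), add `n i = ⌈(D·E i)/(-N i i)⌉` times `E i`. -/
def unload {s : ℕ} (r : ℕ) (N : Matrix (Fin s) (Fin s) ℤ) (D : Fin s → ℤ) :
    Fin s → ℤ :=
  fun i =>
    if (i : ℕ) < r ∧ 0 < interZ N D i then
      D i + ⌈(interZ N D i : ℚ) / (-(N i i : ℚ))⌉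
    else D i

private lemma diag_neg (s r : ℕ) (N : Matrix (Fin s) (Fin s) ℤ)
    (hneg : ∀ x : Fin s → ℚ, (∀ i : Fin s, r ≤ (i : ℕ) → x i = 0) → x ≠ 0 →
      (∑ i, ∑ j, x i * x j * (N i j : ℚ)) < 0)
    (i : Fin s) (hi : (i : ℕ) < r) : N i i < 0 := by
  have h := hneg (fun j => if j = i then 1 else 0)
    (fun j hj => by
      simp only [ite_eq_right_iff]
      intro h; omega)
    (by
      intro h
      have := congrFun h i
      simp at this)
  simp only [ite_mul, one_mul, zero_mul, mul_ite, mul_one, mul_zero] at h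
  simp only [Finset.sum_ite_eq', Finset.mem_univ, if_true] at h
  exact_mod_cast h

/-- Let `D'` be the result of one unloading step applied to the
integral divisor `D`.  Then `D ≤ D' ≤ D̃`, and `D'` has the same antinef closure
`D̃` as `D`. -/
theorem unload_step_le_and_same_closure
    (s r : ℕ) (hr : 1 ≤ r) (hrs : r ≤ s)
    (N : Matrix (Fin s) (Fin s) ℤ)
    (hsym : ∀ i j, N i j = N j i)
    (hoff : ∀ i j : Fin s, i ≠ j → 0 ≤ N i j)
    (hneg : ∀ x : Fin s → ℚ, (∀ i : Fin s, r ≤ (i : ℕ) → x i = 0) → x ≠ 0 →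
      (∑ i, ∑ j, x i * x j * (N i j : ℚ)) < 0)
    (D : Fin s → ℤ) (Dt : Fin s → ℤ)
    (hDt : IsAntinefClosure r N (fun i => (D i : ℚ)) Dt) :
    D ≤ unload r N D ∧ unload r N D ≤ Dt ∧
      IsAntinefClosure r N (fun i => (unload r N D i : ℚ)) Dt := by
  obtain ⟨hanti, hge, hmin⟩ := hDt
  have hDDt : ∀ i, D i ≤ Dt i := fun i => by have h := hge i; simp only [] at h; exact_mod_cast h
  -- D ≤ unload
  have h1 : D ≤ unload r N D := by
    intro i
    unfold unload
    split
    · rename_i h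
      have hNii : N i i < 0 := diag_neg s r N hneg i h.1
      have hpos : (0 : ℚ) < (interZ N D i : ℚ) / (-(N i i : ℚ)) := by
        apply div_pos
        · exact_mod_cast h.2
        · have : (N i i : ℚ) < 0 := by exact_mod_cast hNii
          linarith
      have := Int.ceil_nonneg (le_of_lt hpos)
      linarith
    · exact le_refl _
  -- unload ≤ Dt
  have h2 : unload r N D ≤ Dt := by
    intro i
    unfold unload
    split
    · rename_i h
      obtain ⟨hir, hpos⟩ := h
      have hNii : N i i < 0 := diag_neg s r N hneg i hir
      -- key: interZ N D i + (Dt i - D i) * N i i ≤ interZ N Dt i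
      have hkey : interZ N D i + (Dt i - D i) * N i i ≤ interZ N Dt i := by
        have : interZ N Dt i - interZ N D i = ∑ j, (Dt j - D j) * N j i := by
          unfold interZ
          rw [← Finset.sum_sub_distrib]
          congr 1; ext j; ring
        have hterm : (Dt i - D i) * N i i ≤ ∑ j, (Dt j - D j) * N j i := by
          rw [← Finset.sum_erase_add Finset.univ _ (Finset.mem_univ i)]
          have : (0 : ℤ) ≤ ∑ j ∈ Finset.univ.erase i, (Dt j - D j) * N j i := by
            apply Finset.sum_nonneg
            intro j hj
            have hji : j ≠ i := Finset.ne_of_mem_erase hj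
            exact mul_nonneg (by linarith [hDDt j]) (hoff j i hji)
          linarith
        linarith
      have hDti : interZ N Dt i ≤ 0 := hanti i hir
      -- so interZ N D i ≤ (Dt i - D i) * (-N i i)
      have hx : interZ N D i ≤ (Dt i - D i) * (-N i i) := by linarith [hkey]
      -- conclude ceil ≤ Dt i - D i
      have hceil : ⌈(interZ N D i : ℚ) / (-(N i i : ℚ))⌉ ≤ Dt i - D i := by
        rw [Int.ceil_le]
        rw [div_le_iff₀ (by push_cast; linarith [(show (N i i : ℚ) < 0 by exact_mod_cast hNii)])]
        push_cast
        have : (interZ N D i : ℚ) ≤ ((Dt i - D i : ℤ) : ℚ) * ((-N i i : ℤ) : ℚ) := by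
          exact_mod_cast hx
        push_cast at this
        linarith
      linarith
    · exact hDDt i
  refine ⟨h1, h2, hanti, ?_, ?_⟩
  · intro i
    show ((unload r N D i : ℤ) : ℚ) ≤ (Dt i : ℚ)
    exact_mod_cast h2 i
  · intro D' hD' hge'
    apply hmin D' hD'
    intro i
    have hgi : ((unload r N D i : ℤ) : ℚ) ≤ (D' i : ℚ) := hge' i
    show ((D i : ℤ) : ℚ) ≤ (D' i : ℚ)
    have h1i : (D i : ℚ) ≤ (unload r N D i : ℚ) := by exact_mod_cast h1 i
    linarith
end

section
/- Let D ∈ ℚ^s and define the unloading sequence D_1 := ⌈D⌉ and D_{t+1} := the result of one unloading step applied to D_t. Then D_t ≤ D̃ for every t, the sequence is nondecreasing, and there exists t with D_t = D̃; that is, the unloading procedure reaches the antinef closure of D after finitely many steps. -/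
open scoped BigOperators

/-- The unloading sequence `D₁ = ⌈D⌉`, `D_{t+1} = unload D_t` is
nondecreasing, bounded above by the antinef closure `D̃` of `D`, and reaches `D̃`
after finitely many steps. -/
theorem unload_sequence_reaches_closure
    (s r : ℕ) (hr : 1 ≤ r) (hrs : r ≤ s)
    (N : Matrix (Fin s) (Fin s) ℤ)
    (hsym : ∀ i j, N i j = N j i)
    (hoff : ∀ i j : Fin s, i ≠ j → 0 ≤ N i j)
    (hneg : ∀ x : Fin s → ℚ, (∀ i : Fin s, r ≤ (i : ℕ) → x i = 0) → x ≠ 0 →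
      (∑ i, ∑ j, x i * x j * (N i j : ℚ)) < 0)
    (D : Fin s → ℚ) (Dt : Fin s → ℤ)
    (hDt : IsAntinefClosure r N D Dt)
    (seq : ℕ → Fin s → ℤ)
    (hseq0 : seq 0 = fun i => ⌈D i⌉)
    (hseqS : ∀ t, seq (t + 1) = unload r N (seq t)) :
    (∀ t, seq t ≤ Dt) ∧ (∀ t, seq t ≤ seq (t + 1)) ∧ ∃ t, seq t = Dt := by
  classical
  obtain ⟨hanti, hge, hmin⟩ := hDt
  -- the exceptional diagonal entries are negative
  have hdiag : ∀ i : Fin s, (i : ℕ) < r → N i i < 0 := by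
    intro i hi
    set x : Fin s → ℚ := fun j => if j = i then 1 else 0 with hx
    have hxz : x ≠ 0 := by
      intro h
      have := congrFun h i
      simp [hx] at this
    have hsupp : ∀ j : Fin s, r ≤ (j : ℕ) → x j = 0 := by
      intro j hj
      have hji : j ≠ i := by
        intro h; subst h; omega
      simp [hx, hji]
    have hlt := hneg x hsupp hxz
    have hsum : (∑ a, ∑ b, x a * x b * (N a b : ℚ)) = (N i i : ℚ) := by
      simp [hx, ite_mul, mul_ite, Finset.sum_ite_eq', Finset.sum_ite_eq]
    rw [hsum] at hlt
    exact_mod_cast hlt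
  -- one unloading step stays below the antinef closure
  have hstep_le : ∀ E : Fin s → ℤ, E ≤ Dt → unload r N E ≤ Dt := by
    intro E hE i
    unfold unload
    by_cases hc : (i : ℕ) < r ∧ 0 < interZ N E i
    · rw [if_pos hc]
      obtain ⟨hi, hpos⟩ := hc
      have hNi : N i i < 0 := hdiag i hi
      have hsub : interZ N Dt i - interZ N E i = ∑ j, (Dt j - E j) * N j i := by
        rw [interZ, interZ, ← Finset.sum_sub_distrib]
        congr 1; funext j; ring
      have hterm : (Dt i - E i) * N i i ≤ ∑ j, (Dt j - E j) * N j i := by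
        rw [Finset.sum_eq_sum_sdiff_singleton_add (Finset.mem_univ i)
          (fun j => (Dt j - E j) * N j i)]
        have hrest : 0 ≤ ∑ j ∈ Finset.univ \ {i}, (Dt j - E j) * N j i := by
          apply Finset.sum_nonneg
          intro j hj
          have hji : j ≠ i := by simpa using (Finset.mem_sdiff.mp hj).2
          exact mul_nonneg (by linarith [hE j]) (hoff j i hji)
        linarith
      have hkey : interZ N E i ≤ (Dt i - E i) * (-(N i i)) := by
        have h1 : interZ N Dt i ≤ 0 := hanti i hi
        rw [← hsub] at hterm
        nlinarith
      have hNQ : (0 : ℚ) < -(N i i : ℚ) := by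
        have : (N i i : ℚ) < 0 := by exact_mod_cast hNi
        linarith
      have hQ : (interZ N E i : ℚ) / (-(N i i : ℚ)) ≤ ((Dt i - E i : ℤ) : ℚ) := by
        rw [div_le_iff₀ hNQ]
        exact_mod_cast hkey
      have hceil := Int.ceil_le.mpr hQ
      linarith
    · rw [if_neg hc]; exact hE i
  have hle : ∀ t, seq t ≤ Dt := by
    intro t
    induction t with
    | zero =>
      rw [hseq0]; intro i; exact Int.ceil_le.mpr (hge i)
    | succ t ih =>
      rw [hseqS]; exact hstep_le _ ih
  have hmono : ∀ t, seq t ≤ seq (t + 1) := by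
    intro t i
    rw [hseqS]
    unfold unload
    by_cases hc : (i : ℕ) < r ∧ 0 < interZ N (seq t) i
    · rw [if_pos hc]
      have hNQ : (0 : ℚ) < -(N i i : ℚ) := by
        have : (N i i : ℚ) < 0 := by exact_mod_cast hdiag i hc.1
        linarith
      have hq : (0 : ℚ) < (interZ N (seq t) i : ℚ) / (-(N i i : ℚ)) :=
        div_pos (by exact_mod_cast hc.2) hNQ
      have := Int.ceil_pos.mpr hq
      linarith
    · rw [if_neg hc]
  -- strict increase at a non-antinef step
  have hstrict : ∀ t, ¬ Antinef r N (seq t) →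
      ∃ i, seq t i + 1 ≤ seq (t + 1) i := by
    intro t ht
    unfold Antinef at ht
    push_neg at ht
    obtain ⟨i, hi, hpos'⟩ := ht
    have hpos : 0 < interZ N (seq t) i := hpos'
    refine ⟨i, ?_⟩
    rw [hseqS]
    unfold unload
    rw [if_pos ⟨hi, hpos⟩]
    have hNQ : (0 : ℚ) < -(N i i : ℚ) := by
      have : (N i i : ℚ) < 0 := by exact_mod_cast hdiag i hi
      linarith
    have hq : (0 : ℚ) < (interZ N (seq t) i : ℚ) / (-(N i i : ℚ)) :=
      div_pos (by exact_mod_cast hpos) hNQ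
    have := Int.ceil_pos.mpr hq
    linarith
  -- there is an antinef term in the sequence
  have hexanti : ∃ t, Antinef r N (seq t) := by
    by_contra h
    push_neg at h
    set m : ℕ → ℤ := fun t => ∑ i, (Dt i - seq t i) with hm
    have hm0 : ∀ t, 0 ≤ m t := by
      intro t
      exact Finset.sum_nonneg fun i _ => by linarith [hle t i]
    have hdec : ∀ t, m (t + 1) + 1 ≤ m t := by
      intro t
      obtain ⟨i, hi1⟩ := hstrict t (h t)
      have hdiff : m t - m (t + 1) = ∑ j, (seq (t + 1) j - seq t j) := by
        rw [hm, ← Finset.sum_sub_distrib]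
        congr 1; funext j; ring
      have hone : (1 : ℤ) ≤ ∑ j, (seq (t + 1) j - seq t j) := by
        have := Finset.single_le_sum (f := fun j => seq (t + 1) j - seq t j)
          (fun j _ => sub_nonneg.mpr (hmono t j)) (Finset.mem_univ i)
        linarith
      linarith [hdiff ▸ hone]
    have hbound : ∀ t : ℕ, m t + t ≤ m 0 := by
      intro t
      induction t with
      | zero => simp
      | succ t ih =>
        have := hdec t
        push_cast
        push_cast at ih
        linarith
    have hb := hbound ((m 0).toNat + 1)
    have h0 : 0 ≤ m 0 := hm0 0
    have := hm0 ((m 0).toNat + 1)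
    omega
  obtain ⟨t, ht⟩ := hexanti
  refine ⟨hle, hmono, t, ?_⟩
  have h0t : ∀ u, seq 0 ≤ seq u := by
    intro u
    induction u with
    | zero => exact le_refl _
    | succ u ih => exact le_trans ih (hmono u)
  have hDle : ∀ i, D i ≤ ((seq t i : ℤ) : ℚ) := by
    intro i
    have h1 : ⌈D i⌉ ≤ seq t i := by
      have := h0t t i
      rw [hseq0] at this
      exact this
    calc D i ≤ (⌈D i⌉ : ℚ) := Int.le_ceil _
      _ ≤ ((seq t i : ℤ) : ℚ) := by exact_mod_cast h1
  have hmin' := hmin (seq t) ht hDle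
  funext i
  exact le_antisymm (hle t i) (hmin' i)
end

section
/- Let D_1 ≤ D_2 be integral divisors. Then their antinef closures coincide, D̃_1 = D̃_2, if and only if D̃_1 ≥ D_2. -/
open scoped BigOperators

/-- For integral divisors `D₁ ≤ D₂`, the antinef closures coincide,
`D̃₁ = D̃₂`, if and only if `D̃₁ ≥ D₂`. -/
theorem closure_eq_iff_closure_ge
    (s r : ℕ) (hr : 1 ≤ r) (hrs : r ≤ s)
    (N : Matrix (Fin s) (Fin s) ℤ)
    (hsym : ∀ i j, N i j = N j i)
    (hoff : ∀ i j : Fin s, i ≠ j → 0 ≤ N i j)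
    (hneg : ∀ x : Fin s → ℚ, (∀ i : Fin s, r ≤ (i : ℕ) → x i = 0) → x ≠ 0 →
      (∑ i, ∑ j, x i * x j * (N i j : ℚ)) < 0)
    (D₁ D₂ : Fin s → ℤ) (h12 : D₁ ≤ D₂)
    (Dt₁ Dt₂ : Fin s → ℤ)
    (hDt₁ : IsAntinefClosure r N (fun i => (D₁ i : ℚ)) Dt₁)
    (hDt₂ : IsAntinefClosure r N (fun i => (D₂ i : ℚ)) Dt₂) :
    Dt₁ = Dt₂ ↔ D₂ ≤ Dt₁ := by
  obtain ⟨ha₁, hge₁, hmin₁⟩ := hDt₁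
  obtain ⟨ha₂, hge₂, hmin₂⟩ := hDt₂
  constructor
  · intro he i
    rw [he]
    have := hge₂ i
    simp only at this
    exact_mod_cast this
  · intro hle
    funext i
    have h1 : Dt₁ i ≤ Dt₂ i := by
      apply hmin₁ Dt₂ ha₂
      intro j
      have := hge₂ j
      simp only at this ⊢
      exact_mod_cast (Int.cast_le.mpr (h12 j)).trans this
    have h2 : Dt₂ i ≤ Dt₁ i := by
      apply hmin₂ Dt₁ ha₁
      intro j
      simp only
      exact_mod_cast hle j
    omega
end

section
/- Let D_1 ≤ D_2 be integral divisors. Then D̃_1 < D̃_2 (meaning D̃_1 ≤ D̃_2 and D̃_1 ≠ D̃_2) if and only if v_i(D̃_1) < v_i(D_2) for some index i. -/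
open scoped BigOperators

/-- For integral divisors `D₁ ≤ D₂`, one has `D̃₁ < D̃₂`
(i.e. `D̃₁ ≤ D̃₂` and `D̃₁ ≠ D̃₂`) if and only if `v_i(D̃₁) < v_i(D₂)` for some `i`. -/
theorem closure_lt_iff_exists_lt
    (s r : ℕ) (hr : 1 ≤ r) (hrs : r ≤ s)
    (N : Matrix (Fin s) (Fin s) ℤ)
    (hsym : ∀ i j, N i j = N j i)
    (hoff : ∀ i j : Fin s, i ≠ j → 0 ≤ N i j)
    (hneg : ∀ x : Fin s → ℚ, (∀ i : Fin s, r ≤ (i : ℕ) → x i = 0) → x ≠ 0 →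
      (∑ i, ∑ j, x i * x j * (N i j : ℚ)) < 0)
    (D₁ D₂ : Fin s → ℤ) (h12 : D₁ ≤ D₂)
    (Dt₁ Dt₂ : Fin s → ℤ)
    (hDt₁ : IsAntinefClosure r N (fun i => (D₁ i : ℚ)) Dt₁)
    (hDt₂ : IsAntinefClosure r N (fun i => (D₂ i : ℚ)) Dt₂) :
    (Dt₁ ≤ Dt₂ ∧ Dt₁ ≠ Dt₂) ↔ ∃ i, Dt₁ i < D₂ i := by
  obtain ⟨ha₁, hge₁, hmin₁⟩ := hDt₁
  obtain ⟨ha₂, hge₂, hmin₂⟩ := hDt₂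
  have hle : Dt₁ ≤ Dt₂ := by
    intro i
    exact hmin₁ Dt₂ ha₂ (fun i => le_trans (by simpa using (show (D₁ i:ℚ) ≤ D₂ i by exact_mod_cast h12 i)) (hge₂ i)) i
  constructor
  · rintro ⟨-, hne⟩
    by_contra h
    push_neg at h
    apply hne
    have hle' : Dt₂ ≤ Dt₁ := fun i => hmin₂ Dt₁ ha₁ (fun i => by simpa using (show (D₂ i:ℚ) ≤ Dt₁ i by exact_mod_cast h i)) i
    exact le_antisymm hle hle'
  · rintro ⟨i, hi⟩
    refine ⟨hle, fun heq => ?_⟩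
    have : (D₂ i : ℚ) ≤ (Dt₂ i : ℚ) := hge₂ i
    have h2 : D₂ i ≤ Dt₂ i := by exact_mod_cast this
    rw [heq] at hi
    omega
end

section
/- Let 0 < λ' < λ be rational numbers and write e_i^{λ'} := v_i(D_{λ'}). Then: (i) D_{λ'} = D_λ if and only if ⌊λ·e_i − k_i⌋ ≤ e_i^{λ'} for every index i; (ii) D_{λ'} < D_λ (meaning D_{λ'} ≤ D_λ and D_{λ'} ≠ D_λ) if and only if ⌊λ·e_i − k_i⌋ > e_i^{λ'} for some index i. (Under Lipman's correspondence these are the conditions 𝒥(𝔞^{λ'}) = 𝒥(𝔞^λ) and 𝒥(𝔞^{λ'}) ⊋ 𝒥(𝔞^λ), respectively.) -/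
open scoped BigOperators

/-- For rationals `0 < λ' < λ`, with `D_λ` the antinef closure of
`⌊λF − K⌋`:  (i) `D_{λ'} = D_λ` iff `⌊λe_i − k_i⌋ ≤ e_i^{λ'}` for all `i`;
(ii) `D_{λ'} < D_λ` iff `⌊λe_i − k_i⌋ > e_i^{λ'}` for some `i`. -/
theorem multiplier_ideal_jump_criterion
    (s r : ℕ) (hr : 1 ≤ r) (hrs : r ≤ s)
    (N : Matrix (Fin s) (Fin s) ℤ)
    (hsym : ∀ i j, N i j = N j i)
    (hoff : ∀ i j : Fin s, i ≠ j → 0 ≤ N i j)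
    (hneg : ∀ x : Fin s → ℚ, (∀ i : Fin s, r ≤ (i : ℕ) → x i = 0) → x ≠ 0 →
      (∑ i, ∑ j, x i * x j * (N i j : ℚ)) < 0)
    (F : Fin s → ℤ) (hF1 : ∀ i, 1 ≤ F i) (hFanti : Antinef r N F)
    (K : Fin s → ℚ) (hKaff : ∀ i : Fin s, r ≤ (i : ℕ) → K i = 0)
    (hKexc : ∀ i : Fin s, (i : ℕ) < r →
      (∑ j, K j * (N j i : ℚ)) + (N i i : ℚ) = -2)
    (lam' lam : ℚ) (hl0 : 0 < lam') (hll : lam' < lam)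
    (Dl' Dl : Fin s → ℤ)
    (hDl' : IsAntinefClosure r N (fun i => (⌊lam' * (F i : ℚ) - K i⌋ : ℚ)) Dl')
    (hDl : IsAntinefClosure r N (fun i => (⌊lam * (F i : ℚ) - K i⌋ : ℚ)) Dl) :
    (Dl' = Dl ↔ ∀ i, ⌊lam * (F i : ℚ) - K i⌋ ≤ Dl' i) ∧
      ((Dl' ≤ Dl ∧ Dl' ≠ Dl) ↔ ∃ i, Dl' i < ⌊lam * (F i : ℚ) - K i⌋) := by

  have hfl : ∀ i, ⌊lam' * (F i : ℚ) - K i⌋ ≤ ⌊lam * (F i : ℚ) - K i⌋ := by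
    intro i
    apply Int.floor_mono
    have hF0 : (0:ℚ) ≤ (F i : ℚ) := by exact_mod_cast le_trans zero_le_one (hF1 i)
    have := mul_le_mul_of_nonneg_right (le_of_lt hll) hF0
    linarith
  have hDlle : ∀ i, Dl' i ≤ Dl i := by
    apply hDl'.2.2 Dl hDl.1
    intro i
    have h1 : (⌊lam * (F i : ℚ) - K i⌋ : ℚ) ≤ (Dl i : ℚ) := hDl.2.1 i
    have h2 : (⌊lam' * (F i : ℚ) - K i⌋ : ℚ) ≤ (⌊lam * (F i : ℚ) - K i⌋ : ℚ) := by
      exact_mod_cast hfl i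
    linarith
  have key : (Dl' = Dl ↔ ∀ i, ⌊lam * (F i : ℚ) - K i⌋ ≤ Dl' i) := by
    constructor
    · intro h i
      rw [h]
      have := hDl.2.1 i
      simp only at this
      exact_mod_cast this
    · intro h
      funext i
      refine le_antisymm (hDlle i) ?_
      apply hDl.2.2 Dl' hDl'.1 (fun j => by show ((⌊lam * (F j : ℚ) - K j⌋:ℤ):ℚ) ≤ _; exact_mod_cast h j)
  refine ⟨key, ?_, ?_⟩
  · rintro ⟨_, hne⟩
    by_contra hno
    push_neg at hno
    exact hne (key.mpr hno)
  · rintro ⟨i, hi⟩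
    refine ⟨fun j => hDlle j, fun h => ?_⟩
    exact absurd (key.mp h i) (not_le.mpr hi)
end

section
/- Let λ' ∈ ℚ with λ' > 0 and write e_i^{λ'} := v_i(D_{λ'}). Set λ := min_{1≤i≤s} (k_i + 1 + e_i^{λ'})/e_i. Then λ' < λ, D_c = D_{λ'} for every rational c with λ' ≤ c < λ, and D_λ ≠ D_{λ'}; that is, λ is the jumping number consecutive to λ'. -/
open scoped BigOperators

/-- **Theorem `lct_ideal`.** Given `λ' > 0` and the antinef closure
`D_{λ'}` of `⌊λ'F − K⌋`, the rational number
`λ = min_i (k_i + 1 + e_i^{λ'}) / e_i` is the jumping number consecutive to `λ'`: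
`λ' < λ`, `D_c = D_{λ'}` for every `λ' ≤ c < λ`, and `D_λ ≠ D_{λ'}`. -/
theorem next_jumping_number
    (s r : ℕ) (hr : 1 ≤ r) (hrs : r ≤ s)
    (N : Matrix (Fin s) (Fin s) ℤ)
    (hsym : ∀ i j, N i j = N j i)
    (hoff : ∀ i j : Fin s, i ≠ j → 0 ≤ N i j)
    (hneg : ∀ x : Fin s → ℚ, (∀ i : Fin s, r ≤ (i : ℕ) → x i = 0) → x ≠ 0 →
      (∑ i, ∑ j, x i * x j * (N i j : ℚ)) < 0)
    (F : Fin s → ℤ) (hF1 : ∀ i, 1 ≤ F i) (hFanti : Antinef r N F)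
    (K : Fin s → ℚ) (hKaff : ∀ i : Fin s, r ≤ (i : ℕ) → K i = 0)
    (hKexc : ∀ i : Fin s, (i : ℕ) < r →
      (∑ j, K j * (N j i : ℚ)) + (N i i : ℚ) = -2)
    (lam' : ℚ) (hl0 : 0 < lam')
    (Dl' : Fin s → ℤ)
    (hDl' : IsAntinefClosure r N (fun i => (⌊lam' * (F i : ℚ) - K i⌋ : ℚ)) Dl')
    (lam : ℚ)
    (hlam_le : ∀ i, lam ≤ (K i + 1 + (Dl' i : ℚ)) / (F i : ℚ))
    (hlam_mem : ∃ i, lam = (K i + 1 + (Dl' i : ℚ)) / (F i : ℚ)) :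
    lam' < lam ∧
      (∀ c : ℚ, lam' ≤ c → c < lam →
        ∀ Dc : Fin s → ℤ,
          IsAntinefClosure r N (fun i => (⌊c * (F i : ℚ) - K i⌋ : ℚ)) Dc → Dc = Dl') ∧
      (∀ Dl : Fin s → ℤ,
        IsAntinefClosure r N (fun i => (⌊lam * (F i : ℚ) - K i⌋ : ℚ)) Dl → Dl ≠ Dl') := by
  have hF0 : ∀ i, (0 : ℚ) < (F i : ℚ) := fun i => by
    exact_mod_cast lt_of_lt_of_le one_pos (hF1 i)
  -- key: lam' * F i < K i + 1 + Dl' i for all i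
  have keyA : ∀ i, lam' * (F i : ℚ) < K i + 1 + (Dl' i : ℚ) := by
    intro i
    have h1 : (⌊lam' * (F i : ℚ) - K i⌋ : ℚ) ≤ (Dl' i : ℚ) := hDl'.2.1 i
    have h2 : lam' * (F i : ℚ) - K i < (⌊lam' * (F i : ℚ) - K i⌋ : ℚ) + 1 :=
      Int.lt_floor_add_one _
    linarith
  have claim1 : lam' < lam := by
    obtain ⟨i0, hi0⟩ := hlam_mem
    rw [hi0, lt_div_iff₀ (hF0 i0)]
    exact keyA i0
  refine ⟨claim1, ?_, ?_⟩
  · intro c hc1 hc2 Dc hDc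
    -- c * F i < K i + 1 + Dl' i
    have keyB : ∀ i, (⌊c * (F i : ℚ) - K i⌋ : ℚ) ≤ (Dl' i : ℚ) := by
      intro i
      have h1 : c * (F i : ℚ) < K i + 1 + (Dl' i : ℚ) :=
        (lt_div_iff₀ (hF0 i)).mp (lt_of_lt_of_le hc2 (hlam_le i))
      have h2 : ⌊c * (F i : ℚ) - K i⌋ < Dl' i + 1 := by
        rw [Int.floor_lt]
        push_cast
        linarith
      exact_mod_cast Int.lt_add_one_iff.mp h2
    have hle1 : ∀ i, Dc i ≤ Dl' i := hDc.2.2 Dl' hDl'.1 keyB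
    have hle2 : ∀ i, Dl' i ≤ Dc i := by
      refine hDl'.2.2 Dc hDc.1 ?_
      intro i
      have hmono : ⌊lam' * (F i : ℚ) - K i⌋ ≤ ⌊c * (F i : ℚ) - K i⌋ := by
        apply Int.floor_le_floor
        nlinarith [hF0 i]
      have h3 : (⌊c * (F i : ℚ) - K i⌋ : ℚ) ≤ (Dc i : ℚ) := hDc.2.1 i
      have h4 : (⌊c * (F i : ℚ) - K i⌋ : ℤ) ≤ Dc i := by exact_mod_cast h3
      show (⌊lam' * (F i : ℚ) - K i⌋ : ℚ) ≤ (Dc i : ℚ)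
      exact_mod_cast le_trans hmono h4
    funext i
    exact le_antisymm (hle1 i) (hle2 i)
  · intro Dl hDl heq
    obtain ⟨i0, hi0⟩ := hlam_mem
    have hmul : lam * (F i0 : ℚ) = K i0 + 1 + (Dl' i0 : ℚ) := by
      rw [hi0, div_mul_cancel₀ _ (ne_of_gt (hF0 i0))]
    have hfloor : (⌊lam * (F i0 : ℚ) - K i0⌋ : ℚ) = (Dl' i0 : ℚ) + 1 := by
      have : lam * (F i0 : ℚ) - K i0 = ((Dl' i0 + 1 : ℤ) : ℚ) := by
        push_cast; linarith
      rw [this, Int.floor_intCast]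
      push_cast; ring
    have h5 : (⌊lam * (F i0 : ℚ) - K i0⌋ : ℚ) ≤ (Dl i0 : ℚ) := hDl.2.1 i0
    rw [heq] at h5
    rw [hfloor] at h5
    linarith
end

section
/- Write e_i^{λ_0} := v_i(D_0), where D_0 is the antinef closure of ⌊−K⌋. Then the rational number lct := min_{1≤i≤s} (k_i + 1 + e_i^{λ_0})/e_i satisfies: D_c = D_0 for every rational c with 0 ≤ c < lct and D_{lct} ≠ D_0; that is, lct is the smallest jumping number (the log-canonical threshold of 𝔞). -/
open scoped BigOperators

/-- With `D₀` the antinef closure of `⌊−K⌋`, the rational number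
`lct = min_i (k_i + 1 + e_i^{λ₀}) / e_i` is the log-canonical threshold:
`D_c = D₀` for every `0 ≤ c < lct` and `D_{lct} ≠ D₀`. -/
theorem log_canonical_threshold
    (s r : ℕ) (hr : 1 ≤ r) (hrs : r ≤ s)
    (N : Matrix (Fin s) (Fin s) ℤ)
    (hsym : ∀ i j, N i j = N j i)
    (hoff : ∀ i j : Fin s, i ≠ j → 0 ≤ N i j)
    (hneg : ∀ x : Fin s → ℚ, (∀ i : Fin s, r ≤ (i : ℕ) → x i = 0) → x ≠ 0 →
      (∑ i, ∑ j, x i * x j * (N i j : ℚ)) < 0)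
    (F : Fin s → ℤ) (hF1 : ∀ i, 1 ≤ F i) (hFanti : Antinef r N F)
    (K : Fin s → ℚ) (hKaff : ∀ i : Fin s, r ≤ (i : ℕ) → K i = 0)
    (hKexc : ∀ i : Fin s, (i : ℕ) < r →
      (∑ j, K j * (N j i : ℚ)) + (N i i : ℚ) = -2)
    (D0 : Fin s → ℤ)
    (hD0 : IsAntinefClosure r N (fun i => (⌊-K i⌋ : ℚ)) D0)
    (lct : ℚ)
    (hlct_le : ∀ i, lct ≤ (K i + 1 + (D0 i : ℚ)) / (F i : ℚ))
    (hlct_mem : ∃ i, lct = (K i + 1 + (D0 i : ℚ)) / (F i : ℚ)) :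
    (∀ c : ℚ, 0 ≤ c → c < lct →
      ∀ Dc : Fin s → ℤ,
        IsAntinefClosure r N (fun i => (⌊c * (F i : ℚ) - K i⌋ : ℚ)) Dc → Dc = D0) ∧
    (∀ Dlct : Fin s → ℤ,
      IsAntinefClosure r N (fun i => (⌊lct * (F i : ℚ) - K i⌋ : ℚ)) Dlct → Dlct ≠ D0) := by
  obtain ⟨hD0anti, hD0ge, hD0min⟩ := hD0
  have hFpos : ∀ i, (0 : ℚ) < (F i : ℚ) := fun i => by
    exact_mod_cast lt_of_lt_of_le one_pos (hF1 i)
  constructor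
  · intro c hc0 hclt Dc hDc
    obtain ⟨hDcanti, hDcge, hDcmin⟩ := hDc
    funext i
    have h1 : Dc i ≤ D0 i := by
      refine hDcmin D0 hD0anti (fun i => ?_) i
      have hlt : c * (F i : ℚ) - K i < (D0 i : ℚ) + 1 := by
        have hle : lct * (F i : ℚ) ≤ K i + 1 + (D0 i : ℚ) := by
          have := hlct_le i
          calc lct * (F i : ℚ) ≤ ((K i + 1 + (D0 i : ℚ)) / (F i : ℚ)) * (F i : ℚ) :=
                mul_le_mul_of_nonneg_right this (le_of_lt (hFpos i))
            _ = K i + 1 + (D0 i : ℚ) := div_mul_cancel₀ _ (ne_of_gt (hFpos i))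
        have hcl : c * (F i : ℚ) < lct * (F i : ℚ) :=
          mul_lt_mul_of_pos_right hclt (hFpos i)
        linarith
      have h : ⌊c * (F i : ℚ) - K i⌋ < D0 i + 1 := by
        rw [Int.floor_lt]; push_cast; exact hlt
      show ((⌊c * (F i : ℚ) - K i⌋ : ℤ) : ℚ) ≤ ((D0 i : ℤ) : ℚ)
      exact_mod_cast Int.lt_add_one_iff.mp h
    have h2 : D0 i ≤ Dc i := by
      refine hD0min Dc hDcanti (fun i => ?_) i
      have hfl : ⌊-K i⌋ ≤ ⌊c * (F i : ℚ) - K i⌋ := by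
        apply Int.floor_le_floor
        nlinarith [hFpos i]
      calc ((⌊-K i⌋ : ℤ) : ℚ) ≤ ((⌊c * (F i : ℚ) - K i⌋ : ℤ) : ℚ) := by exact_mod_cast hfl
        _ ≤ (Dc i : ℚ) := hDcge i
    exact le_antisymm h1 h2
  · intro Dlct hDlct hEq
    obtain ⟨i, hi⟩ := hlct_mem
    obtain ⟨_, hge, _⟩ := hDlct
    have hx : lct * (F i : ℚ) - K i = ((D0 i + 1 : ℤ) : ℚ) := by
      have : lct * (F i : ℚ) = K i + 1 + (D0 i : ℚ) := by
        rw [hi, div_mul_cancel₀ _ (ne_of_gt (hFpos i))]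
      push_cast
      linarith
    have : ((⌊lct * (F i : ℚ) - K i⌋ : ℤ) : ℚ) ≤ (Dlct i : ℚ) := hge i
    rw [hx, Int.floor_intCast] at this
    have : D0 i + 1 ≤ Dlct i := by exact_mod_cast this
    rw [hEq] at this
    omega
end

section
/- Let 0 ≤ λ' < λ be consecutive jumping values. Then the antinef closure of ⌊λF − K⌋ − G_λ equals D_{λ'}; that is, the minimal jumping divisor G_λ is a jumping divisor for λ. -/
open scoped BigOperators

/-- For consecutive jumping values `0 ≤ λ' < λ`, the minimal jumping
divisor `G_λ` is a jumping divisor for `λ`: the antinef closure of `⌊λF − K⌋ − G_λ`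
equals `D_{λ'}`. -/
theorem minimal_jumping_divisor_is_jumping
    (s r : ℕ) (hr : 1 ≤ r) (hrs : r ≤ s)
    (N : Matrix (Fin s) (Fin s) ℤ)
    (hsym : ∀ i j, N i j = N j i)
    (hoff : ∀ i j : Fin s, i ≠ j → 0 ≤ N i j)
    (hneg : ∀ x : Fin s → ℚ, (∀ i : Fin s, r ≤ (i : ℕ) → x i = 0) → x ≠ 0 →
      (∑ i, ∑ j, x i * x j * (N i j : ℚ)) < 0)
    (F : Fin s → ℤ) (hF1 : ∀ i, 1 ≤ F i) (hFanti : Antinef r N F)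
    (K : Fin s → ℚ) (hKaff : ∀ i : Fin s, r ≤ (i : ℕ) → K i = 0)
    (hKexc : ∀ i : Fin s, (i : ℕ) < r →
      (∑ j, K j * (N j i : ℚ)) + (N i i : ℚ) = -2)
    (lam' lam : ℚ) (hl0 : 0 ≤ lam') (hll : lam' < lam)
    (Dl' : Fin s → ℤ)
    (hconsec : ∀ c : ℚ, lam' ≤ c → c < lam →
      IsAntinefClosure r N (fun i => (⌊c * (F i : ℚ) - K i⌋ : ℚ)) Dl')
    (Dl : Fin s → ℤ)
    (hDl : IsAntinefClosure r N (fun i => (⌊lam * (F i : ℚ) - K i⌋ : ℚ)) Dl)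
    (hjump : Dl ≠ Dl')
    (Gl : Fin s → ℤ)
    (hGl : ∀ i, Gl i = if lam * (F i : ℚ) = K i + 1 + (Dl' i : ℚ) then 1 else 0)
    :
    IsAntinefClosure r N (fun i => ((⌊lam * (F i : ℚ) - K i⌋ - Gl i : ℤ) : ℚ)) Dl' := by
  have hFpos : ∀ i, (0:ℚ) < (F i : ℚ) := by
    intro i; exact_mod_cast lt_of_lt_of_le Int.zero_lt_one (hF1 i)
  -- fractional-part based gap
  set δ : Fin s → ℚ := fun i =>
    if Int.fract (lam * (F i : ℚ) - K i) = 0 then 1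
    else Int.fract (lam * (F i : ℚ) - K i) with hδdef
  have hδpos : ∀ i, 0 < δ i := by
    intro i
    by_cases h : Int.fract (lam * (F i : ℚ) - K i) = 0
    · simp [hδdef, h]
    · simp only [hδdef, if_neg h]
      exact lt_of_le_of_ne (Int.fract_nonneg _) (Ne.symm h)
  have hne : (Finset.univ : Finset (Fin s)).Nonempty :=
    ⟨⟨0, by omega⟩, Finset.mem_univ _⟩
  set ε : ℚ := Finset.univ.inf' hne (fun i => δ i / (F i : ℚ)) with hεdef
  have hεpos : 0 < ε := by
    rw [hεdef, Finset.lt_inf'_iff]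
    intro i _
    exact div_pos (hδpos i) (hFpos i)
  set c : ℚ := max lam' (lam - ε/2) with hcdef
  have hc1 : lam' ≤ c := le_max_left _ _
  have hc2 : c < lam := by
    rw [hcdef]; exact max_lt hll (by linarith)
  have hcε : lam - c ≤ ε/2 := by
    have h := le_max_right lam' (lam - ε/2)
    rw [hcdef]; linarith
  -- key inequality: c·F i − K i is within δ i below lam·F i − K i
  have hkeylt : ∀ i, lam * (F i : ℚ) - K i - δ i < c * (F i : ℚ) - K i := by
    intro i
    have hεi : ε ≤ δ i / (F i : ℚ) := Finset.inf'_le _ (Finset.mem_univ i)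
    have h1 : (lam - c) * (F i : ℚ) ≤ (ε/2) * (F i : ℚ) :=
      mul_le_mul_of_nonneg_right hcε (le_of_lt (hFpos i))
    have h2 : (ε/2) * (F i : ℚ) < δ i := by
      have h3 : (ε/2) < δ i / (F i : ℚ) := lt_of_lt_of_le (by linarith) hεi
      calc (ε/2) * (F i : ℚ) < (δ i / (F i : ℚ)) * (F i : ℚ) :=
            mul_lt_mul_of_pos_right h3 (hFpos i)
        _ = δ i := div_mul_cancel₀ _ (ne_of_gt (hFpos i))
    nlinarith
  have hkeyle : ∀ i, c * (F i : ℚ) - K i < lam * (F i : ℚ) - K i := by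
    intro i
    have := mul_lt_mul_of_pos_right hc2 (hFpos i)
    linarith
  obtain ⟨hanti, hlb, hmin⟩ := hconsec c hc1 hc2
  have hfloorle : ∀ i, ⌊c * (F i : ℚ) - K i⌋ ≤ Dl' i := by
    intro i
    have h : ((⌊c * (F i : ℚ) - K i⌋ : ℤ) : ℚ) ≤ ((Dl' i : ℤ) : ℚ) := hlb i
    exact_mod_cast h
  -- lower bounds on Dl'
  have hA : ∀ i, Int.fract (lam * (F i : ℚ) - K i) = 0 →
      ⌊lam * (F i : ℚ) - K i⌋ - 1 ≤ Dl' i := by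
    intro i hf
    have hx : ((⌊lam * (F i : ℚ) - K i⌋ : ℚ)) = lam * (F i : ℚ) - K i := by
      have := Int.floor_add_fract (lam * (F i : ℚ) - K i)
      rw [hf] at this; linarith
    have hδi : δ i = 1 := by simp [hδdef, hf]
    have h1 : ((⌊lam * (F i : ℚ) - K i⌋ - 1 : ℤ) : ℚ) ≤ c * (F i : ℚ) - K i := by
      have := hkeylt i
      push_cast
      rw [hδi] at this
      linarith
    have h2 : ⌊lam * (F i : ℚ) - K i⌋ - 1 ≤ ⌊c * (F i : ℚ) - K i⌋ := Int.le_floor.mpr h1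
    exact le_trans h2 (hfloorle i)
  have hB : ∀ i, Int.fract (lam * (F i : ℚ) - K i) ≠ 0 →
      ⌊lam * (F i : ℚ) - K i⌋ ≤ Dl' i := by
    intro i hf
    have hδi : δ i = Int.fract (lam * (F i : ℚ) - K i) := by simp [hδdef, hf]
    have hfr := Int.floor_add_fract (lam * (F i : ℚ) - K i)
    have h1 : ((⌊lam * (F i : ℚ) - K i⌋ : ℤ) : ℚ) ≤ c * (F i : ℚ) - K i := by
      have := hkeylt i
      rw [hδi] at this
      push_cast
      linarith
    have h2 : ⌊lam * (F i : ℚ) - K i⌋ ≤ ⌊c * (F i : ℚ) - K i⌋ := Int.le_floor.mpr h1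
    exact le_trans h2 (hfloorle i)
  refine ⟨hanti, ?_, ?_⟩
  · -- lower bound: ⌊λF−K⌋ − G ≤ Dl'
    intro i
    have hz : (⌊lam * (F i : ℚ) - K i⌋ : ℤ) - Gl i ≤ Dl' i := by
      rw [hGl i]
      by_cases h : lam * (F i : ℚ) = K i + 1 + (Dl' i : ℚ)
      · rw [if_pos h]
        have hxi : lam * (F i : ℚ) - K i = ((Dl' i + 1 : ℤ) : ℚ) := by push_cast; linarith
        have hfl : ⌊lam * (F i : ℚ) - K i⌋ = Dl' i + 1 := by rw [hxi, Int.floor_intCast]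
        omega
      · rw [if_neg h]
        by_cases hf : Int.fract (lam * (F i : ℚ) - K i) = 0
        · have h1 := hA i hf
          have hx : ((⌊lam * (F i : ℚ) - K i⌋ : ℚ)) = lam * (F i : ℚ) - K i := by
            have := Int.floor_add_fract (lam * (F i : ℚ) - K i)
            rw [hf] at this; linarith
          rcases lt_or_eq_of_le (by omega : ⌊lam * (F i : ℚ) - K i⌋ ≤ Dl' i + 1) with h2 | h2
          · omega
          · exfalso; apply h
            have : ((⌊lam * (F i : ℚ) - K i⌋ : ℤ) : ℚ) = ((Dl' i + 1 : ℤ) : ℚ) := by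
              exact_mod_cast congrArg (fun z : ℤ => (z : ℚ)) h2
            push_cast at this
            linarith [hx]
        · have := hB i hf; omega
    calc ((⌊lam * (F i : ℚ) - K i⌋ - Gl i : ℤ) : ℚ) ≤ ((Dl' i : ℤ) : ℚ) := by exact_mod_cast hz
      _ = (Dl' i : ℚ) := rfl
  · -- minimality
    intro D' hant hge i
    apply hmin D' hant
    intro j
    have hgej : (⌊lam * (F j : ℚ) - K j⌋ : ℤ) - Gl j ≤ D' j := by
      have h : ((⌊lam * (F j : ℚ) - K j⌋ - Gl j : ℤ) : ℚ) ≤ ((D' j : ℤ) : ℚ) := hge j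
      exact_mod_cast h
    have hstep : ⌊c * (F j : ℚ) - K j⌋ ≤ ⌊lam * (F j : ℚ) - K j⌋ - Gl j := by
      rw [hGl j]
      by_cases h : lam * (F j : ℚ) = K j + 1 + (Dl' j : ℚ)
      · rw [if_pos h]
        have hxi : lam * (F j : ℚ) - K j = ((Dl' j + 1 : ℤ) : ℚ) := by push_cast; linarith
        have hfl : ⌊lam * (F j : ℚ) - K j⌋ = Dl' j + 1 := by rw [hxi, Int.floor_intCast]
        have hlt : c * (F j : ℚ) - K j < ((Dl' j + 1 : ℤ) : ℚ) := by
          rw [← hxi]; exact hkeyle j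
        have : ⌊c * (F j : ℚ) - K j⌋ < Dl' j + 1 := Int.floor_lt.mpr hlt
        omega
      · rw [if_neg h]
        have : ⌊c * (F j : ℚ) - K j⌋ ≤ ⌊lam * (F j : ℚ) - K j⌋ :=
          Int.floor_le_floor (le_of_lt (hkeyle j))
        omega
    show ((⌊c * (F j : ℚ) - K j⌋ : ℤ) : ℚ) ≤ ((D' j : ℤ) : ℚ)
    exact_mod_cast le_trans hstep hgej
end

section
/- Let 0 ≤ λ' < λ be consecutive jumping values and let G be a reduced (0/1-valued) divisor such that λ·e_i − k_i is a positive integer for every i ∈ supp G and such that the antinef closure C of ⌊λF − K⌋ − G is different from D_λ. Then C = D_{λ'} if and only if G_λ ≤ G; moreover, if G_λ ≰ G then D_{λ'} < C < D_λ (where D' < D'' means D' ≤ D'' entrywise and D' ≠ D''). -/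
open scoped BigOperators

/-- **Theorem `jump1`.** Let `G` be a contributing divisor associated to
the jumping number `λ` (a reduced candidate divisor whose associated antinef closure
`C` of `⌊λF − K⌋ − G` differs from `D_λ`).  Then `C = D_{λ'}` iff `G_λ ≤ G`; and
otherwise `D_{λ'} < C < D_λ`. -/
theorem contributing_divisor_dichotomy
    (s r : ℕ) (hr : 1 ≤ r) (hrs : r ≤ s)
    (N : Matrix (Fin s) (Fin s) ℤ)
    (hsym : ∀ i j, N i j = N j i)
    (hoff : ∀ i j : Fin s, i ≠ j → 0 ≤ N i j)
    (hneg : ∀ x : Fin s → ℚ, (∀ i : Fin s, r ≤ (i : ℕ) → x i = 0) → x ≠ 0 →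
      (∑ i, ∑ j, x i * x j * (N i j : ℚ)) < 0)
    (F : Fin s → ℤ) (hF1 : ∀ i, 1 ≤ F i) (hFanti : Antinef r N F)
    (K : Fin s → ℚ) (hKaff : ∀ i : Fin s, r ≤ (i : ℕ) → K i = 0)
    (hKexc : ∀ i : Fin s, (i : ℕ) < r →
      (∑ j, K j * (N j i : ℚ)) + (N i i : ℚ) = -2)
    (lam' lam : ℚ) (hl0 : 0 ≤ lam') (hll : lam' < lam)
    (Dl' : Fin s → ℤ)
    (hconsec : ∀ c : ℚ, lam' ≤ c → c < lam →
      IsAntinefClosure r N (fun i => (⌊c * (F i : ℚ) - K i⌋ : ℚ)) Dl')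
    (Dl : Fin s → ℤ)
    (hDl : IsAntinefClosure r N (fun i => (⌊lam * (F i : ℚ) - K i⌋ : ℚ)) Dl)
    (hjump : Dl ≠ Dl')
    (Gl : Fin s → ℤ)
    (hGl : ∀ i, Gl i = if lam * (F i : ℚ) = K i + 1 + (Dl' i : ℚ) then 1 else 0)
    (G : Fin s → ℤ) (hGred : ∀ i, G i = 0 ∨ G i = 1)
    (hGcand : ∀ i, G i = 1 → ∃ m : ℤ, 0 < m ∧ lam * (F i : ℚ) - K i = (m : ℚ))
    (C : Fin s → ℤ)
    (hC : IsAntinefClosure r N (fun i => ((⌊lam * (F i : ℚ) - K i⌋ - G i : ℤ) : ℚ)) C)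
    (hCne : C ≠ Dl) :
    (C = Dl' ↔ Gl ≤ G) ∧
      (¬ Gl ≤ G → (Dl' ≤ C ∧ Dl' ≠ C) ∧ (C ≤ Dl ∧ C ≠ Dl)) := by

  have hFpos : ∀ i, (0:ℚ) < (F i : ℚ) := fun i => by
    have := hF1 i; exact_mod_cast lt_of_lt_of_le one_pos this
  have hlampos : lam' < lam := hll
  -- L is the floor divisor at lam
  have lemB : ∀ (i : Fin s) (z : ℤ), (z : ℚ) < lam * (F i : ℚ) - K i → z ≤ Dl' i := by
    intro i z hz
    set c : ℚ := max lam' (((z : ℚ) + K i) / (F i : ℚ)) with hc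
    have hc1 : lam' ≤ c := le_max_left _ _
    have hc2 : c < lam := by
      apply max_lt hll
      rw [div_lt_iff₀ (hFpos i)]
      nlinarith [hz]
    have h := (hconsec c hc1 hc2).2.1 i
    have hzf : z ≤ ⌊c * (F i : ℚ) - K i⌋ := by
      apply Int.le_floor.mpr
      have h2 : ((z : ℚ) + K i) / (F i : ℚ) ≤ c := le_max_right _ _
      rw [div_le_iff₀ (hFpos i)] at h2
      nlinarith [h2]
    have h3 : ((⌊c * (F i : ℚ) - K i⌋ : ℤ) : ℚ) ≤ (Dl' i : ℚ) := h
    have h4 : (z : ℚ) ≤ (Dl' i : ℚ) := le_trans (by exact_mod_cast hzf) h3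
    exact_mod_cast h4
  -- Dl' is below L - G pointwise provided Gl ≤ G
  have key : Gl ≤ G → ∀ i, ⌊lam * (F i : ℚ) - K i⌋ - G i ≤ Dl' i := by
    intro hle i
    by_cases hint : ∃ m : ℤ, lam * (F i : ℚ) - K i = (m : ℚ)
    · obtain ⟨m, hm⟩ := hint
      have hLm : ⌊lam * (F i : ℚ) - K i⌋ = m := by rw [hm, Int.floor_intCast]
      have hm1 : m - 1 ≤ Dl' i := by
        apply lemB i (m - 1)
        rw [hm]; push_cast; linarith
      rcases hGred i with h0 | h1
      · -- G i = 0, so Gl i = 0, i.e. lam * F i ≠ K i + 1 + Dl' i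
        have hGli : Gl i ≤ 0 := h0 ▸ hle i
        have hne : lam * (F i : ℚ) ≠ K i + 1 + (Dl' i : ℚ) := by
          intro heq
          rw [hGl i, if_pos heq] at hGli
          norm_num at hGli
        have hne2 : Dl' i ≠ m - 1 := by
          intro heq
          apply hne
          have : (Dl' i : ℚ) = (m : ℚ) - 1 := by rw [heq]; push_cast; ring
          linarith [hm, this]
        have : m ≤ Dl' i := by omega
        omega
      · rw [h1]; omega
    · -- non-integer case: G i = 0 and floor < value strictly
      have h0 : G i = 0 := by
        rcases hGred i with h0 | h1
        · exact h0
        · exfalso; obtain ⟨m, _, hm⟩ := hGcand i h1; exact hint ⟨m, hm⟩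
      rw [h0]
      have hstrict : ((⌊lam * (F i : ℚ) - K i⌋ : ℤ) : ℚ) < lam * (F i : ℚ) - K i := by
        rcases lt_or_eq_of_le (Int.floor_le (lam * (F i : ℚ) - K i)) with h | h
        · exact h
        · exact absurd ⟨⌊lam * (F i : ℚ) - K i⌋, h.symm⟩ hint
      have := lemB i _ hstrict
      omega
  -- Dl' ≤ C always
  have hDl'C : ∀ i, Dl' i ≤ C i := by
    apply (hconsec lam' le_rfl hll).2.2 C hC.1
    intro i
    have hCi := hC.2.1 i
    have hbound : ⌊lam' * (F i : ℚ) - K i⌋ ≤ ⌊lam * (F i : ℚ) - K i⌋ - G i := by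
      rcases hGred i with h0 | h1
      · rw [h0, sub_zero]
        apply Int.floor_le_floor
        have : lam' * (F i : ℚ) ≤ lam * (F i : ℚ) :=
          mul_le_mul_of_nonneg_right (le_of_lt hll) (le_of_lt (hFpos i))
        linarith
      · obtain ⟨m, _, hm⟩ := hGcand i h1
        have hLm : ⌊lam * (F i : ℚ) - K i⌋ = m := by rw [hm, Int.floor_intCast]
        have : ⌊lam' * (F i : ℚ) - K i⌋ < m := by
          apply Int.floor_lt.mpr
          have : lam' * (F i : ℚ) < lam * (F i : ℚ) :=
            mul_lt_mul_of_pos_right hll (hFpos i)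
          rw [← hm]; linarith
        omega
    calc ((⌊lam' * (F i : ℚ) - K i⌋ : ℤ) : ℚ)
        ≤ ((⌊lam * (F i : ℚ) - K i⌋ - G i : ℤ) : ℚ) := by exact_mod_cast hbound
      _ ≤ (C i : ℚ) := hCi
  -- C ≤ Dl always
  have hCDl : ∀ i, C i ≤ Dl i := by
    apply hC.2.2 Dl hDl.1
    intro i
    have h1 := hDl.2.1 i
    have h0 : 0 ≤ G i := by rcases hGred i with h | h <;> omega
    have : ((⌊lam * (F i : ℚ) - K i⌋ - G i : ℤ) : ℚ) ≤ ((⌊lam * (F i : ℚ) - K i⌋ : ℤ) : ℚ) := by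
      exact_mod_cast (by omega : ⌊lam * (F i : ℚ) - K i⌋ - G i ≤ ⌊lam * (F i : ℚ) - K i⌋)
    exact le_trans this h1
  -- forward direction of the iff
  have fwd : C = Dl' → Gl ≤ G := by
    intro hCeq
    intro i
    show Gl i ≤ G i
    rw [hGl i]
    split_ifs with h
    · -- lam * F i = K i + 1 + Dl' i
      have hm : lam * (F i : ℚ) - K i = ((Dl' i + 1 : ℤ) : ℚ) := by push_cast; linarith
      have hLm : ⌊lam * (F i : ℚ) - K i⌋ = Dl' i + 1 := by rw [hm, Int.floor_intCast]
      have hCi : ((⌊lam * (F i : ℚ) - K i⌋ - G i : ℤ) : ℚ) ≤ (C i : ℚ) := hC.2.1 i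
      have : ⌊lam * (F i : ℚ) - K i⌋ - G i ≤ C i := by exact_mod_cast hCi
      rw [hCeq] at this
      omega
    · rcases hGred i with h0 | h1 <;> omega
  have bwd : Gl ≤ G → C = Dl' := by
    intro hle
    funext i
    apply le_antisymm
    · apply hC.2.2 Dl' (hconsec lam' le_rfl hll).1
      intro j
      show ((⌊lam * (F j : ℚ) - K j⌋ - G j : ℤ) : ℚ) ≤ (Dl' j : ℚ)
      exact_mod_cast key hle j
    · exact hDl'C i
  refine ⟨⟨fwd, bwd⟩, fun hnle => ⟨⟨fun i => hDl'C i, ?_⟩, ⟨fun i => hCDl i, hCne⟩⟩⟩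
  intro heq
  exact hnle (fwd heq.symm)
end

section
/- Let 0 ≤ λ' < λ be consecutive jumping values. Then every reduced (0/1-valued) divisor G with G_λ ≤ G ≤ H_λ is a jumping divisor for λ; that is, the antinef closure of ⌊λF − K⌋ − G equals D_{λ'}. -/
open scoped BigOperators

/-- For consecutive jumping values `0 ≤ λ' < λ`, every reduced
divisor `G` with `G_λ ≤ G ≤ H_λ` is a jumping divisor for `λ`: the antinef closure
of `⌊λF − K⌋ − G` equals `D_{λ'}`. -/
theorem interval_of_jumping_divisors
    (s r : ℕ) (hr : 1 ≤ r) (hrs : r ≤ s)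
    (N : Matrix (Fin s) (Fin s) ℤ)
    (hsym : ∀ i j, N i j = N j i)
    (hoff : ∀ i j : Fin s, i ≠ j → 0 ≤ N i j)
    (hneg : ∀ x : Fin s → ℚ, (∀ i : Fin s, r ≤ (i : ℕ) → x i = 0) → x ≠ 0 →
      (∑ i, ∑ j, x i * x j * (N i j : ℚ)) < 0)
    (F : Fin s → ℤ) (hF1 : ∀ i, 1 ≤ F i) (hFanti : Antinef r N F)
    (K : Fin s → ℚ) (hKaff : ∀ i : Fin s, r ≤ (i : ℕ) → K i = 0)
    (hKexc : ∀ i : Fin s, (i : ℕ) < r →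
      (∑ j, K j * (N j i : ℚ)) + (N i i : ℚ) = -2)
    (lam' lam : ℚ) (hl0 : 0 ≤ lam') (hll : lam' < lam)
    (Dl' : Fin s → ℤ)
    (hconsec : ∀ c : ℚ, lam' ≤ c → c < lam →
      IsAntinefClosure r N (fun i => (⌊c * (F i : ℚ) - K i⌋ : ℚ)) Dl')
    (Dl : Fin s → ℤ)
    (hDl : IsAntinefClosure r N (fun i => (⌊lam * (F i : ℚ) - K i⌋ : ℚ)) Dl)
    (hjump : Dl ≠ Dl')
    (Gl : Fin s → ℤ)
    (hGl : ∀ i, Gl i = if lam * (F i : ℚ) = K i + 1 + (Dl' i : ℚ) then 1 else 0)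
    (G : Fin s → ℤ) (hGred : ∀ i, G i = 0 ∨ G i = 1)
    (hGlG : Gl ≤ G)
    (hGH : ∀ i, G i = 1 → ∃ m : ℤ, 0 < m ∧ lam * (F i : ℚ) - K i = (m : ℚ)) :
    IsAntinefClosure r N (fun i => ((⌊lam * (F i : ℚ) - K i⌋ - G i : ℤ) : ℚ)) Dl' := by
  have hF0 : ∀ i, (0:ℚ) < (F i : ℚ) := by
    intro i
    have h := hF1 i
    have : (1:ℚ) ≤ (F i : ℚ) := by exact_mod_cast h
    linarith
  -- Key: for every i, ⌈λ F_i − K_i⌉ − 1 ≤ Dl' i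
  have key : ∀ i, ⌈lam * (F i:ℚ) - K i⌉ - 1 ≤ Dl' i := by
    intro i
    set t := lam * (F i:ℚ) - K i with ht
    have hδ : (0:ℚ) < t - ((⌈t⌉:ℚ) - 1) := by
      have h := Int.ceil_lt_add_one t
      linarith
    set ε := (t - ((⌈t⌉:ℚ) - 1)) / (2 * (F i:ℚ)) with hεdef
    have hεpos : 0 < ε := by
      apply div_pos hδ
      have := hF0 i
      linarith
    set c := max lam' (lam - ε) with hcdef
    have hc1 : lam' ≤ c := le_max_left _ _
    have hc2 : c < lam := max_lt hll (by linarith)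
    have hc3 : lam - ε ≤ c := le_max_right _ _
    have hεF : ε * (F i:ℚ) = (t - ((⌈t⌉:ℚ) - 1)) / 2 := by
      rw [hεdef, div_mul_eq_mul_div, mul_comm (2:ℚ) ((F i:ℚ)), mul_comm (t - ((⌈t⌉:ℚ) - 1)) ((F i:ℚ)), mul_div_mul_left _ _ (hF0 i).ne']
    have hrw : c * (F i:ℚ) - K i = t - (lam - c) * (F i:ℚ) := by
      rw [ht]; ring
    have h2 : (lam - c) * (F i:ℚ) ≤ ε * (F i:ℚ) :=
      mul_le_mul_of_nonneg_right (by linarith) (hF0 i).le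
    have h1 : ((⌈t⌉:ℚ) - 1) < c * (F i:ℚ) - K i := by
      rw [hrw]
      rw [hεF] at h2
      linarith
    have hfl : ⌈t⌉ - 1 ≤ ⌊c * (F i:ℚ) - K i⌋ := by
      apply Int.le_floor.mpr
      push_cast
      linarith
    have hcc : (⌊c * (F i:ℚ) - K i⌋ : ℚ) ≤ (Dl' i : ℚ) := (hconsec c hc1 hc2).2.1 i
    have hcc' : ⌊c * (F i:ℚ) - K i⌋ ≤ Dl' i := by exact_mod_cast hcc
    omega
  refine ⟨(hconsec lam' le_rfl hll).1, ?_, ?_⟩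
  · -- the divisor lies below Dl'
    intro i
    have hkey := key i
    have hfc : ⌊lam * (F i:ℚ) - K i⌋ ≤ ⌈lam * (F i:ℚ) - K i⌉ := Int.floor_le_ceil _
    have hz : ⌊lam * (F i:ℚ) - K i⌋ - G i ≤ Dl' i := by
      rcases hGred i with h0 | h1
      · rw [h0]
        -- need ⌊t⌋ ≤ Dl' i
        by_contra hcon
        push_neg at hcon
        -- then ⌊t⌋ = ⌈t⌉ = Dl' i + 1, so t is an integer equal to Dl' i + 1
        have heq : ⌊lam * (F i:ℚ) - K i⌋ = ⌈lam * (F i:ℚ) - K i⌉ := by omega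
        have hDv : ⌊lam * (F i:ℚ) - K i⌋ = Dl' i + 1 := by omega
        have htint : (⌊lam * (F i:ℚ) - K i⌋ : ℚ) = lam * (F i:ℚ) - K i := by
          have ha := Int.floor_le (lam * (F i:ℚ) - K i)
          have hb := Int.le_ceil (lam * (F i:ℚ) - K i)
          rw [← heq] at hb
          linarith
        have hlamF : lam * (F i:ℚ) = K i + 1 + (Dl' i : ℚ) := by
          have : ((Dl' i + 1 : ℤ) : ℚ) = lam * (F i:ℚ) - K i := by
            rw [← hDv, htint]
          push_cast at this
          linarith
        have hGl1 : Gl i = 1 := by rw [hGl i, if_pos hlamF]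
        have hle : Gl i ≤ G i := hGlG i
        rw [hGl1, h0] at hle
        exact absurd hle (by norm_num)
      · rw [h1]; omega
    show ((⌊lam * (F i:ℚ) - K i⌋ - G i : ℤ) : ℚ) ≤ (Dl' i : ℚ)
    exact_mod_cast hz
  · -- minimality
    intro D' hanti hge i
    refine (hconsec lam' le_rfl hll).2.2 D' hanti ?_ i
    intro j
    have hgeq : (⌊lam * (F j:ℚ) - K j⌋ - G j : ℤ) ≤ D' j := by
      have h : ((⌊lam * (F j:ℚ) - K j⌋ - G j : ℤ) : ℚ) ≤ (D' j : ℚ) := hge j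
      exact_mod_cast h
    have hz : ⌊lam' * (F j:ℚ) - K j⌋ ≤ D' j := by
      rcases hGred j with h0 | h1
      · have hle : ⌊lam' * (F j:ℚ) - K j⌋ ≤ ⌊lam * (F j:ℚ) - K j⌋ := by
          apply Int.floor_le_floor
          have : lam' * (F j:ℚ) ≤ lam * (F j:ℚ) :=
            mul_le_mul_of_nonneg_right hll.le (hF0 j).le
          linarith
        omega
      · obtain ⟨m, hm, hmt⟩ := hGH j h1
        have hfm : ⌊lam * (F j:ℚ) - K j⌋ = m := by
          rw [hmt]; exact Int.floor_intCast m
        have hlt : lam' * (F j:ℚ) - K j < (m:ℚ) := by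
          rw [← hmt]
          have : lam' * (F j:ℚ) < lam * (F j:ℚ) :=
            mul_lt_mul_of_pos_right hll (hF0 j)
          linarith
        have : ⌊lam' * (F j:ℚ) - K j⌋ < m := Int.floor_lt.mpr hlt
        omega
    show ((⌊lam' * (F j:ℚ) - K j⌋ : ℤ) : ℚ) ≤ (D' j : ℚ)
    exact_mod_cast hz
end

section
/- Let 0 ≤ λ' < λ be consecutive jumping values. Then: (i) the antinef closure of D_{λ'} + G_λ equals D_λ; and (ii) there exists ε₀ > 0 such that for every rational ε with 0 < ε < ε₀, the antinef closure of ⌊(λ − ε)F − K⌋ + G_λ equals D_λ. -/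
open scoped BigOperators

/-- **Proposition `jump2`.** For consecutive jumping values
`0 ≤ λ' < λ`:  (i) the antinef closure of `D_{λ'} + G_λ` is `D_λ`; (ii) for all
sufficiently small rational `ε > 0`, the antinef closure of `⌊(λ−ε)F − K⌋ + G_λ`
is `D_λ`. -/
theorem jump_forward_via_minimal_divisor
    (s r : ℕ) (hr : 1 ≤ r) (hrs : r ≤ s)
    (N : Matrix (Fin s) (Fin s) ℤ)
    (hsym : ∀ i j, N i j = N j i)
    (hoff : ∀ i j : Fin s, i ≠ j → 0 ≤ N i j)
    (hneg : ∀ x : Fin s → ℚ, (∀ i : Fin s, r ≤ (i : ℕ) → x i = 0) → x ≠ 0 →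
      (∑ i, ∑ j, x i * x j * (N i j : ℚ)) < 0)
    (F : Fin s → ℤ) (hF1 : ∀ i, 1 ≤ F i) (hFanti : Antinef r N F)
    (K : Fin s → ℚ) (hKaff : ∀ i : Fin s, r ≤ (i : ℕ) → K i = 0)
    (hKexc : ∀ i : Fin s, (i : ℕ) < r →
      (∑ j, K j * (N j i : ℚ)) + (N i i : ℚ) = -2)
    (lam' lam : ℚ) (hl0 : 0 ≤ lam') (hll : lam' < lam)
    (Dl' : Fin s → ℤ)
    (hconsec : ∀ c : ℚ, lam' ≤ c → c < lam →
      IsAntinefClosure r N (fun i => (⌊c * (F i : ℚ) - K i⌋ : ℚ)) Dl')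
    (Dl : Fin s → ℤ)
    (hDl : IsAntinefClosure r N (fun i => (⌊lam * (F i : ℚ) - K i⌋ : ℚ)) Dl)
    (hjump : Dl ≠ Dl')
    (Gl : Fin s → ℤ)
    (hGl : ∀ i, Gl i = if lam * (F i : ℚ) = K i + 1 + (Dl' i : ℚ) then 1 else 0)
    :
    IsAntinefClosure r N (fun i => ((Dl' i + Gl i : ℤ) : ℚ)) Dl ∧
      ∃ ε₀ : ℚ, 0 < ε₀ ∧ ∀ ε : ℚ, 0 < ε → ε < ε₀ →
        IsAntinefClosure r N
          (fun i => ((⌊(lam - ε) * (F i : ℚ) - K i⌋ + Gl i : ℤ) : ℚ)) Dl := by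
  have hFpos : ∀ i, (0:ℚ) < (F i : ℚ) := fun i => by
    have h := hF1 i; exact_mod_cast lt_of_lt_of_le zero_lt_one h
  have hGl01 : ∀ i, Gl i = 0 ∨ Gl i = 1 := fun i => by
    rw [hGl i]; split <;> simp
  have hGl1 : ∀ i, Gl i = 1 → lam * (F i : ℚ) = K i + 1 + (Dl' i : ℚ) := by
    intro i h
    by_contra hc
    rw [hGl i, if_neg hc] at h
    exact absurd h (by norm_num)
  have hGl1' : ∀ i, lam * (F i : ℚ) = K i + 1 + (Dl' i : ℚ) → Gl i = 1 := fun i h => by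
    rw [hGl i, if_pos h]
  -- Dl' ≤ Dl
  have hcons' := hconsec lam' le_rfl hll
  have hDl'le : ∀ i, Dl' i ≤ Dl i := by
    have h := hcons'.2.2 Dl hDl.1 (fun i => by
      have h1 : ⌊lam' * (F i : ℚ) - K i⌋ ≤ ⌊lam * (F i : ℚ) - K i⌋ := by
        apply Int.floor_mono
        have := mul_le_mul_of_nonneg_right hll.le (hFpos i).le
        linarith
      have h2 := hDl.2.1 i
      have h1' : (⌊lam' * (F i : ℚ) - K i⌋ : ℚ) ≤ (⌊lam * (F i : ℚ) - K i⌋ : ℚ) := by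
        exact_mod_cast h1
      exact h1'.trans h2)
    exact h
  have hfloorlam : ∀ i, Gl i = 1 → ⌊lam * (F i : ℚ) - K i⌋ = Dl' i + 1 := by
    intro i h
    have heq := hGl1 i h
    have hx : lam * (F i : ℚ) - K i = ((Dl' i + 1 : ℤ) : ℚ) := by push_cast; linarith
    rw [hx, Int.floor_intCast]
  have hDlG : ∀ i, Dl' i + Gl i ≤ Dl i := by
    intro i
    rcases hGl01 i with h | h
    · rw [h, add_zero]; exact hDl'le i
    · rw [h]
      have h2 := hDl.2.1 i
      have h2b : (⌊lam * (F i : ℚ) - K i⌋ : ℚ) ≤ (Dl i : ℚ) := h2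
      have h2' : ⌊lam * (F i : ℚ) - K i⌋ ≤ Dl i := by exact_mod_cast h2b
      rw [hfloorlam i h] at h2'
      exact h2'
  -- key technical lemma
  have hbelow : ∀ (i : Fin s) (m : ℤ), (m : ℚ) + K i < lam * (F i : ℚ) → m ≤ Dl' i := by
    intro i m hm
    set c := max lam' (((m : ℚ) + K i) / (F i : ℚ)) with hc
    have hc1 : lam' ≤ c := le_max_left _ _
    have hc2 : c < lam := by
      apply max_lt hll
      rw [div_lt_iff₀ (hFpos i)]
      linarith
    have h3 : (m : ℚ) ≤ c * (F i : ℚ) - K i := by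
      have h4 : ((m : ℚ) + K i) / (F i : ℚ) ≤ c := le_max_right _ _
      have h5 := (div_le_iff₀ (hFpos i)).mp h4
      linarith
    have h6 := (hconsec c hc1 hc2).2.1 i
    have h7 : m ≤ ⌊c * (F i : ℚ) - K i⌋ := Int.le_floor.mpr h3
    have h6b : (⌊c * (F i : ℚ) - K i⌋ : ℚ) ≤ (Dl' i : ℚ) := h6
    have h8 : ⌊c * (F i : ℚ) - K i⌋ ≤ Dl' i := by exact_mod_cast h6b
    omega
  have hA : ∀ i, ⌊lam * (F i : ℚ) - K i⌋ ≤ Dl' i + Gl i := by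
    intro i
    rcases hGl01 i with h0 | h1
    · rw [h0, add_zero]
      set m := ⌊lam * (F i : ℚ) - K i⌋ with hm
      have hm1 : (m : ℚ) ≤ lam * (F i : ℚ) - K i := Int.floor_le _
      have hm2 : m - 1 ≤ Dl' i := by
        apply hbelow i (m - 1)
        push_cast
        linarith
      by_contra hcon
      have hme : m = Dl' i + 1 := by omega
      rcases eq_or_lt_of_le hm1 with heq | hlt
      · have hx : lam * (F i : ℚ) = K i + 1 + (Dl' i : ℚ) := by
          rw [hme] at heq; push_cast at heq; linarith
        have := hGl1' i hx
        rw [h0] at this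
        exact absurd this (by norm_num)
      · have := hbelow i m (by linarith)
        omega
    · rw [hfloorlam i h1, h1]
  constructor
  · refine ⟨hDl.1, fun i => by
      show ((Dl' i + Gl i : ℤ) : ℚ) ≤ (Dl i : ℚ)
      exact_mod_cast hDlG i, ?_⟩
    intro D' hanti hge i
    refine hDl.2.2 D' hanti (fun j => ?_) i
    have h1 : (⌊lam * (F j : ℚ) - K j⌋ : ℚ) ≤ ((Dl' j + Gl j : ℤ) : ℚ) := by
      exact_mod_cast hA j
    exact h1.trans (hge j)
  · set S : ℤ := ∑ i, F i with hS
    have hFS : ∀ i, F i ≤ S := fun i =>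
      Finset.single_le_sum (fun j _ => by linarith [hF1 j]) (Finset.mem_univ i)
    have hS0 : (0 : ℤ) ≤ S := Finset.sum_nonneg (fun j _ => by linarith [hF1 j])
    have hSQ : (0 : ℚ) ≤ (S : ℚ) := by exact_mod_cast hS0
    refine ⟨min (lam - lam') (1 / ((S : ℚ) + 1)), ?_, ?_⟩
    · exact lt_min (by linarith) (by positivity)
    · intro ε hε hεlt
      have hε1 : ε < lam - lam' := lt_of_lt_of_le hεlt (min_le_left _ _)
      have hε2 : ε < 1 / ((S : ℚ) + 1) := lt_of_lt_of_le hεlt (min_le_right _ _)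
      have hεF : ∀ i, ε * (F i : ℚ) < 1 := by
        intro i
        have hFi : (F i : ℚ) ≤ (S : ℚ) := by exact_mod_cast hFS i
        have h : ε * ((S : ℚ) + 1) < 1 :=
          (lt_div_iff₀ (by linarith : (0:ℚ) < (S:ℚ)+1)).mp hε2
        nlinarith [(hFpos i).le]
      have hcons := hconsec (lam - ε) (by linarith) (by linarith)
      have hflo : ∀ i, ⌊(lam - ε) * (F i : ℚ) - K i⌋ ≤ Dl' i := fun i => by
        have hb : (⌊(lam - ε) * (F i : ℚ) - K i⌋ : ℚ) ≤ (Dl' i : ℚ) := hcons.2.1 i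
        exact_mod_cast hb
      have hfloG : ∀ i, Gl i = 1 → ⌊(lam - ε) * (F i : ℚ) - K i⌋ = Dl' i := by
        intro i h1
        have heq := hGl1 i h1
        have hx : (lam - ε) * (F i : ℚ) - K i = (Dl' i : ℚ) + 1 - ε * (F i : ℚ) := by
          rw [sub_mul]; linarith
        rw [hx]
        have h01 : 0 < ε * (F i : ℚ) := mul_pos hε (hFpos i)
        rw [Int.floor_eq_iff]
        constructor
        · push_cast; linarith [hεF i]
        · push_cast; linarith
      refine ⟨hDl.1, ?_, ?_⟩
      · intro i
        have h : ⌊(lam - ε) * (F i : ℚ) - K i⌋ + Gl i ≤ Dl i := by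
          have := hflo i; have := hDlG i; omega
        show ((⌊(lam - ε) * (F i : ℚ) - K i⌋ + Gl i : ℤ) : ℚ) ≤ (Dl i : ℚ)
        exact_mod_cast h
      · intro D' hanti hge
        have hge' : ∀ i, ⌊(lam - ε) * (F i : ℚ) - K i⌋ + Gl i ≤ D' i := fun i => by
          have hb : ((⌊(lam - ε) * (F i : ℚ) - K i⌋ + Gl i : ℤ) : ℚ) ≤ (D' i : ℚ) := hge i
          exact_mod_cast hb
        have hD'Dl' : ∀ i, Dl' i ≤ D' i := by
          have h := hcons.2.2 D' hanti (fun i => by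
            have h1 := hge' i
            show (⌊(lam - ε) * (F i : ℚ) - K i⌋ : ℚ) ≤ (D' i : ℚ)
            have h2 : ⌊(lam - ε) * (F i : ℚ) - K i⌋ ≤ D' i := by
              rcases hGl01 i with h2 | h2 <;> omega
            exact_mod_cast h2)
          exact h
        have hD'G : ∀ i, Dl' i + Gl i ≤ D' i := by
          intro i
          rcases hGl01 i with h | h
          · have := hD'Dl' i; omega
          · have h1 := hge' i
            rw [hfloG i h] at h1
            omega
        apply hDl.2.2 D' hanti
        intro i
        have h : ⌊lam * (F i : ℚ) - K i⌋ ≤ D' i := le_trans (hA i) (hD'G i)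
        show (⌊lam * (F i : ℚ) - K i⌋ : ℚ) ≤ (D' i : ℚ)
        exact_mod_cast h
end

section
/- Let 0 ≤ λ' < λ be consecutive jumping values and assume that G_λ is supported on exceptional indices. Then for every i ∈ supp G_λ one has (⌈K − λF⌉ + G_λ)·E_i = −2 + λ·ρ_i + Σ_{j adjacent to i} {λ·e_j − k_j} + a_{G_λ}(i). -/
open scoped BigOperators

/-- **Lemma `num`.** Assume the minimal jumping divisor `G_λ` has
exceptional support.  Then for every `i` in the support of `G_λ`,
`(⌈K − λF⌉ + G_λ)·E_i = −2 + λρ_i + Σ_{j adj i} {λe_j − k_j} + a_{G_λ}(i)`. -/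
theorem intersection_formula_minimal_jumping_divisor
    (s r : ℕ) (hr : 1 ≤ r) (hrs : r ≤ s)
    (N : Matrix (Fin s) (Fin s) ℤ)
    (hsym : ∀ i j, N i j = N j i)
    (hoff : ∀ i j : Fin s, i ≠ j → 0 ≤ N i j)
    (hneg : ∀ x : Fin s → ℚ, (∀ i : Fin s, r ≤ (i : ℕ) → x i = 0) → x ≠ 0 →
      (∑ i, ∑ j, x i * x j * (N i j : ℚ)) < 0)
    (hoff01 : ∀ i j : Fin s, i ≠ j → N i j = 0 ∨ N i j = 1)
    (F : Fin s → ℤ) (hF1 : ∀ i, 1 ≤ F i) (hFanti : Antinef r N F)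
    (K : Fin s → ℚ) (hKaff : ∀ i : Fin s, r ≤ (i : ℕ) → K i = 0)
    (hKexc : ∀ i : Fin s, (i : ℕ) < r →
      (∑ j, K j * (N j i : ℚ)) + (N i i : ℚ) = -2)
    (lam' lam : ℚ) (hl0 : 0 ≤ lam') (hll : lam' < lam)
    (Dl' : Fin s → ℤ)
    (hconsec : ∀ c : ℚ, lam' ≤ c → c < lam →
      IsAntinefClosure r N (fun i => (⌊c * (F i : ℚ) - K i⌋ : ℚ)) Dl')
    (Dl : Fin s → ℤ)
    (hDl : IsAntinefClosure r N (fun i => (⌊lam * (F i : ℚ) - K i⌋ : ℚ)) Dl)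
    (hjump : Dl ≠ Dl')
    (Gl : Fin s → ℤ)
    (hGl : ∀ i, Gl i = if lam * (F i : ℚ) = K i + 1 + (Dl' i : ℚ) then 1 else 0)
    (hGlexc : ∀ i : Fin s, r ≤ (i : ℕ) → Gl i = 0) :
    ∀ i : Fin s, Gl i = 1 →
      ((interZ N (fun j => ⌈K j - lam * (F j : ℚ)⌉ + Gl j) i : ℤ) : ℚ) =
        -2 + lam * ((-interZ N F i : ℤ) : ℚ)
          + (∑ j ∈ Finset.univ.filter (fun j => j ≠ i ∧ N j i = 1),
              Int.fract (lam * (F j : ℚ) - K j))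
          + ((Finset.univ.filter (fun j => j ≠ i ∧ N j i = 1 ∧ Gl j = 1)).card : ℚ) := by
  intro i hGi
  have hiexc : (i : ℕ) < r := by
    by_contra h
    push_neg at h
    have := hGlexc i h
    omega
  have hGi' : lam * (F i : ℚ) = K i + 1 + (Dl' i : ℚ) := by
    by_contra h
    rw [hGl i, if_neg h] at hGi
    omega
  have hfri : Int.fract (lam * (F i : ℚ) - K i) = 0 := by
    have h1 : lam * (F i : ℚ) - K i = ((1 + Dl' i : ℤ) : ℚ) := by push_cast; linarith
    rw [h1, Int.fract_intCast]
  have hceil : ∀ j : Fin s, ((⌈K j - lam * (F j : ℚ)⌉ : ℤ) : ℚ) =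
      K j - lam * (F j : ℚ) + Int.fract (lam * (F j : ℚ) - K j) := by
    intro j
    have h2 : (⌈K j - lam * (F j : ℚ)⌉ : ℤ) = -⌊lam * (F j : ℚ) - K j⌋ := by
      rw [← neg_sub (lam * (F j : ℚ)) (K j), Int.ceil_neg]
    have h3 : ((⌊lam * (F j : ℚ) - K j⌋ : ℤ) : ℚ)
        = lam * (F j : ℚ) - K j - Int.fract (lam * (F j : ℚ) - K j) :=
      (Int.self_sub_fract _).symm
    rw [h2]
    push_cast
    rw [h3]
    ring
  have hGl01 : ∀ j, Gl j = 0 ∨ Gl j = 1 := by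
    intro j
    rw [hGl j]
    split <;> simp
  unfold interZ
  push_cast
  have expand : ∑ j, (((⌈K j - lam * (F j : ℚ)⌉ : ℤ) : ℚ) + (Gl j : ℚ)) * (N j i : ℚ)
      = (∑ j, K j * (N j i : ℚ))
        + (∑ j, (-(lam * (F j : ℚ))) * (N j i : ℚ))
        + (∑ j, Int.fract (lam * (F j : ℚ) - K j) * (N j i : ℚ))
        + (∑ j, (Gl j : ℚ) * (N j i : ℚ)) := by
    rw [← Finset.sum_add_distrib, ← Finset.sum_add_distrib, ← Finset.sum_add_distrib]
    refine Finset.sum_congr rfl fun j _ => ?_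
    rw [hceil j]
    ring
  have claimA : ∑ j, Int.fract (lam * (F j : ℚ) - K j) * (N j i : ℚ)
      = ∑ j ∈ Finset.univ.filter (fun j => j ≠ i ∧ N j i = 1),
          Int.fract (lam * (F j : ℚ) - K j) := by
    rw [Finset.sum_filter]
    refine Finset.sum_congr rfl fun j _ => ?_
    by_cases hj : j = i
    · subst hj
      simp [hfri]
    · rcases hoff01 j i hj with h0 | h1
      · simp [h0, hj]
      · simp [h1, hj]
  have claimB : ∑ j, (Gl j : ℚ) * (N j i : ℚ)
      = (N i i : ℚ)
        + ((Finset.univ.filter (fun j => j ≠ i ∧ N j i = 1 ∧ Gl j = 1)).card : ℚ) := by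
    have hcard : ((Finset.univ.filter (fun j => j ≠ i ∧ N j i = 1 ∧ Gl j = 1)).card : ℚ)
        = ∑ j, (if j ≠ i ∧ N j i = 1 ∧ Gl j = 1 then (1 : ℚ) else 0) := by
      rw [Finset.sum_boole]
    have hNii : ∑ j, (if j = i then (N i i : ℚ) else 0) = (N i i : ℚ) := by
      rw [Finset.sum_ite_eq' Finset.univ i (fun _ => (N i i : ℚ))]
      simp
    rw [hcard, ← hNii, ← Finset.sum_add_distrib]
    refine Finset.sum_congr rfl fun j _ => ?_
    by_cases hj : j = i
    · subst hj
      simp [hGi]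
    · rcases hoff01 j i hj with h0 | h1
      · rcases hGl01 j with hg | hg <;> simp [h0, hj, hg]
      · rcases hGl01 j with hg | hg <;> simp [h1, hj, hg]
  have claimC : ∑ j, K j * (N j i : ℚ) = -2 - (N i i : ℚ) := by
    have := hKexc i hiexc
    linarith
  have claimD : ∑ j, (-(lam * (F j : ℚ))) * (N j i : ℚ)
      = lam * -(∑ j, (F j : ℚ) * (N j i : ℚ)) := by
    rw [mul_neg, Finset.mul_sum, ← Finset.sum_neg_distrib]
    refine Finset.sum_congr rfl fun j _ => ?_
    ring
  rw [expand, claimA, claimB, claimC, claimD]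
  ring
end

section
/- Let 0 ≤ λ' < λ be consecutive jumping values and assume that G_λ is supported on exceptional indices. Then (⌈K − λF⌉ + G_λ)·E_i ≥ 0 for every i ∈ supp G_λ. -/
open scoped BigOperators

/-- **Proposition `Num_condition`.** Assume the minimal jumping divisor
`G_λ` has exceptional support.  Then `(⌈K − λF⌉ + G_λ)·E_i ≥ 0` for every `i` in the
support of `G_λ`. -/
theorem nonneg_intersection_minimal_jumping_divisor
    (s r : ℕ) (hr : 1 ≤ r) (hrs : r ≤ s)
    (N : Matrix (Fin s) (Fin s) ℤ)
    (hsym : ∀ i j, N i j = N j i)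
    (hoff : ∀ i j : Fin s, i ≠ j → 0 ≤ N i j)
    (hneg : ∀ x : Fin s → ℚ, (∀ i : Fin s, r ≤ (i : ℕ) → x i = 0) → x ≠ 0 →
      (∑ i, ∑ j, x i * x j * (N i j : ℚ)) < 0)
    (F : Fin s → ℤ) (hF1 : ∀ i, 1 ≤ F i) (hFanti : Antinef r N F)
    (K : Fin s → ℚ) (hKaff : ∀ i : Fin s, r ≤ (i : ℕ) → K i = 0)
    (hKexc : ∀ i : Fin s, (i : ℕ) < r →
      (∑ j, K j * (N j i : ℚ)) + (N i i : ℚ) = -2)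
    (lam' lam : ℚ) (hl0 : 0 ≤ lam') (hll : lam' < lam)
    (Dl' : Fin s → ℤ)
    (hconsec : ∀ c : ℚ, lam' ≤ c → c < lam →
      IsAntinefClosure r N (fun i => (⌊c * (F i : ℚ) - K i⌋ : ℚ)) Dl')
    (Dl : Fin s → ℤ)
    (hDl : IsAntinefClosure r N (fun i => (⌊lam * (F i : ℚ) - K i⌋ : ℚ)) Dl)
    (hjump : Dl ≠ Dl')
    (Gl : Fin s → ℤ)
    (hGl : ∀ i, Gl i = if lam * (F i : ℚ) = K i + 1 + (Dl' i : ℚ) then 1 else 0)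
    (hGlexc : ∀ i : Fin s, r ≤ (i : ℕ) → Gl i = 0) :
    ∀ i : Fin s, Gl i = 1 →
      0 ≤ interZ N (fun j => ⌈K j - lam * (F j : ℚ)⌉ + Gl j) i := by
  intro i hGi
  have hiexc : (i : ℕ) < r := by
    by_contra h
    push_neg at h
    have := hGlexc i h
    omega
  have hanti : Antinef r N Dl' := (hconsec lam' le_rfl hll).1
  -- key ceiling bound : ⌈λ F j − K j⌉ ≤ Dl' j + 1 for every j
  have hceil : ∀ j, ⌈lam * (F j : ℚ) - K j⌉ ≤ Dl' j + 1 := by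
    intro j
    set x : ℚ := lam * (F j : ℚ) - K j with hx
    set t : ℤ := ⌈x⌉ - 1 with ht
    have hFj : (0 : ℚ) < (F j : ℚ) := by
      have := hF1 j; exact_mod_cast lt_of_lt_of_le one_pos (by exact_mod_cast this)
    have htx : (t : ℚ) < x := by
      have h1 := Int.ceil_lt_add_one x
      push_cast [ht]
      linarith
    set c : ℚ := max lam' ((t + K j) / (F j : ℚ)) with hc
    have hc1 : lam' ≤ c := le_max_left _ _
    have hc2 : c < lam := by
      refine max_lt hll ?_
      rw [div_lt_iff₀ hFj]
      have : lam * (F j : ℚ) = x + K j := by rw [hx]; ring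
      linarith
    have hcF : (t : ℚ) + K j ≤ c * (F j : ℚ) := by
      have h1 : (t + K j) / (F j : ℚ) ≤ c := le_max_right _ _
      have := (div_le_iff₀ hFj).mp h1
      linarith
    have h2 := (hconsec c hc1 hc2).2.1 j
    have h3 : ⌊c * (F j : ℚ) - K j⌋ ≤ Dl' j := by
      exact_mod_cast (show ((⌊c * (F j : ℚ) - K j⌋ : ℚ)) ≤ (Dl' j : ℚ) from h2)
    have h4 : t ≤ ⌊c * (F j : ℚ) - K j⌋ := by
      apply Int.le_floor.mpr
      push_cast
      linarith
    omega
  -- entrywise bound : −Dl' j ≤ ⌈K j − λ F j⌉ + Gl j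
  have hflip : ∀ j, ⌈K j - lam * (F j : ℚ)⌉ = -⌊lam * (F j : ℚ) - K j⌋ := by
    intro j
    have : K j - lam * (F j : ℚ) = -(lam * (F j : ℚ) - K j) := by ring
    rw [this, Int.ceil_neg]
  have hG01 : ∀ j, Gl j = 0 ∨ Gl j = 1 := by
    intro j; rw [hGl j]; split <;> simp
  have hAi : ∀ j, Gl j = 1 → ⌈K j - lam * (F j : ℚ)⌉ + Gl j = -Dl' j := by
    intro j hgj
    have hcond : lam * (F j : ℚ) = K j + 1 + (Dl' j : ℚ) := by
      by_contra h
      rw [hGl j, if_neg h] at hgj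
      omega
    have hfl : ⌊lam * (F j : ℚ) - K j⌋ = Dl' j + 1 := by
      have : lam * (F j : ℚ) - K j = ((Dl' j + 1 : ℤ) : ℚ) := by push_cast; linarith
      rw [this, Int.floor_intCast]
    rw [hflip j, hfl, hgj]
    ring
  have hAj : ∀ j, -Dl' j ≤ ⌈K j - lam * (F j : ℚ)⌉ + Gl j := by
    intro j
    rcases hG01 j with hgj | hgj
    · have hcond : lam * (F j : ℚ) ≠ K j + 1 + (Dl' j : ℚ) := by
        intro h
        rw [hGl j, if_pos h] at hgj
        omega
      have hfl : ⌊lam * (F j : ℚ) - K j⌋ ≤ Dl' j := by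
        by_contra h
        push_neg at h
        have hle := Int.floor_le_ceil (lam * (F j : ℚ) - K j)
        have heq : ⌊lam * (F j : ℚ) - K j⌋ = Dl' j + 1 := by
          have := hceil j; omega
        have h1 : ((Dl' j : ℚ) + 1) ≤ lam * (F j : ℚ) - K j := by
          have := Int.floor_le (lam * (F j : ℚ) - K j)
          rw [heq] at this; push_cast at this; linarith
        have h2 : lam * (F j : ℚ) - K j ≤ (Dl' j : ℚ) + 1 := by
          have h3 := Int.le_ceil (lam * (F j : ℚ) - K j)
          have h4 : (⌈lam * (F j : ℚ) - K j⌉ : ℚ) ≤ ((Dl' j : ℚ) + 1) := by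
            exact_mod_cast (by exact_mod_cast hceil j : (⌈lam * (F j : ℚ) - K j⌉ : ℚ) ≤ ((Dl' j + 1 : ℤ) : ℚ))
          linarith
        exact hcond (by linarith)
      rw [hflip j, hgj]
      omega
    · rw [hAi j hgj]
  -- conclude by comparing with −Dl'·E i
  have hneg' : -interZ N Dl' i ≤ interZ N (fun j => ⌈K j - lam * (F j : ℚ)⌉ + Gl j) i := by
    unfold interZ
    rw [← Finset.sum_neg_distrib]
    apply Finset.sum_le_sum
    intro j _
    show -(Dl' j * N j i) ≤ (⌈K j - lam * (F j : ℚ)⌉ + Gl j) * N j i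
    rw [neg_mul_eq_neg_mul]
    by_cases hji : j = i
    · subst hji
      rw [hAi j hGi]
    · exact mul_le_mul_of_nonneg_right (hAj j) (hoff j i hji)
  have h0 : interZ N Dl' i ≤ 0 := hanti i hiexc
  linarith
end

section
/- Let 0 ≤ λ' < λ be consecutive jumping values and assume that G_λ is supported on exceptional indices. If i ∈ supp G_λ is an end of a connected component of G_λ, that is a_{G_λ}(i) ≤ 1, then i is a rupture index or a dicritical index (i.e. a(i) ≥ 3 or ρ_i > 0). -/
open scoped BigOperators

/-- **Theorem `geo_dual_graph`.** Assume the minimal jumping divisor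
`G_λ` has exceptional support.  Every end of a connected component of `G_λ`
(an index `i ∈ supp G_λ` with `a_{G_λ}(i) ≤ 1`) is a rupture index (`a(i) ≥ 3`)
or a dicritical index (`ρ_i > 0`). -/
theorem ends_of_minimal_jumping_divisor
    (s r : ℕ) (hr : 1 ≤ r) (hrs : r ≤ s)
    (N : Matrix (Fin s) (Fin s) ℤ)
    (hsym : ∀ i j, N i j = N j i)
    (hoff : ∀ i j : Fin s, i ≠ j → 0 ≤ N i j)
    (hneg : ∀ x : Fin s → ℚ, (∀ i : Fin s, r ≤ (i : ℕ) → x i = 0) → x ≠ 0 →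
      (∑ i, ∑ j, x i * x j * (N i j : ℚ)) < 0)
    (hoff01 : ∀ i j : Fin s, i ≠ j → N i j = 0 ∨ N i j = 1)
    (F : Fin s → ℤ) (hF1 : ∀ i, 1 ≤ F i) (hFanti : Antinef r N F)
    (K : Fin s → ℚ) (hKaff : ∀ i : Fin s, r ≤ (i : ℕ) → K i = 0)
    (hKexc : ∀ i : Fin s, (i : ℕ) < r →
      (∑ j, K j * (N j i : ℚ)) + (N i i : ℚ) = -2)
    (lam' lam : ℚ) (hl0 : 0 ≤ lam') (hll : lam' < lam)
    (Dl' : Fin s → ℤ)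
    (hconsec : ∀ c : ℚ, lam' ≤ c → c < lam →
      IsAntinefClosure r N (fun i => (⌊c * (F i : ℚ) - K i⌋ : ℚ)) Dl')
    (Dl : Fin s → ℤ)
    (hDl : IsAntinefClosure r N (fun i => (⌊lam * (F i : ℚ) - K i⌋ : ℚ)) Dl)
    (hjump : Dl ≠ Dl')
    (Gl : Fin s → ℤ)
    (hGl : ∀ i, Gl i = if lam * (F i : ℚ) = K i + 1 + (Dl' i : ℚ) then 1 else 0)
    (hGlexc : ∀ i : Fin s, r ≤ (i : ℕ) → Gl i = 0) :
    ∀ i : Fin s, Gl i = 1 →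
      (Finset.univ.filter (fun j => j ≠ i ∧ N j i = 1 ∧ Gl j = 1)).card ≤ 1 →
      3 ≤ (Finset.univ.filter (fun j => j ≠ i ∧ N j i = 1)).card ∨
        0 < -interZ N F i := by
  intro i hGi hcard
  -- `i` is exceptional
  have hiexc : (i : ℕ) < r := by
    by_contra h
    have h0 := hGlexc i (le_of_not_gt h)
    omega
  -- the defining equality at i
  have heqi : lam * (F i : ℚ) = K i + 1 + (Dl' i : ℚ) := by
    by_contra h
    rw [hGl i, if_neg h] at hGi
    exact absurd hGi (by norm_num)
  have hD' := hconsec lam' le_rfl hll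
  have hanti := hD'.1
  -- key lower bound on Dl'
  have key : ∀ j, lam * (F j : ℚ) ≤ K j + 1 + (Dl' j : ℚ) := by
    intro j
    by_contra h
    push_neg at h
    have hFj : (0 : ℚ) < (F j : ℚ) := by
      have := hF1 j; exact_mod_cast lt_of_lt_of_le one_pos (by exact_mod_cast this)
    set c : ℚ := ((Dl' j : ℚ) + 1 + K j) / (F j : ℚ) with hc
    have hclam : c < lam := by
      rw [hc, div_lt_iff₀ hFj]
      linarith
    have hl'c : lam' ≤ c := by
      have hfl := (hconsec lam' le_rfl hll).2.1 j
      have : lam' * (F j : ℚ) - K j - 1 < (⌊lam' * (F j : ℚ) - K j⌋ : ℚ) := by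
        have := Int.sub_one_lt_floor (lam' * (F j : ℚ) - K j)
        linarith
      rw [hc, le_div_iff₀ hFj]
      linarith
    have hfl : (⌊c * (F j : ℚ) - K j⌋ : ℚ) ≤ (Dl' j : ℚ) := (hconsec c hl'c hclam).2.1 j
    have hcF : c * (F j : ℚ) - K j = ((Dl' j + 1 : ℤ) : ℚ) := by
      rw [hc, div_mul_cancel₀ _ (ne_of_gt hFj)]
      push_cast; ring
    rw [hcF, Int.floor_intCast] at hfl
    have : (Dl' j : ℚ) + 1 ≤ (Dl' j : ℚ) := by push_cast at hfl; linarith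
    linarith
  -- excess is nonnegative
  have hFi : interZ N F i ≤ 0 := hFanti i hiexc
  rcases lt_or_eq_of_le hFi with hFneg | hF0
  · exact Or.inr (by omega)
  -- now the excess is zero; prove i is a rupture index
  left
  by_contra h3
  push_neg at h3
  set A : Finset (Fin s) := Finset.univ.filter (fun j => j ≠ i ∧ N j i = 1) with hA
  set S : ℚ := ∑ j, ((Dl' j : ℚ) - (lam * (F j : ℚ) - K j - 1)) * (N j i : ℚ) with hS
  -- each term of S is nonnegative
  have hterm : ∀ j ∈ Finset.univ, (0:ℚ) ≤ ((Dl' j : ℚ) - (lam * (F j : ℚ) - K j - 1)) * (N j i : ℚ) := by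
    intro j _
    rcases eq_or_ne j i with rfl | hji
    · have : (Dl' j : ℚ) - (lam * (F j : ℚ) - K j - 1) = 0 := by linarith [heqi]
      rw [this, zero_mul]
    · apply mul_nonneg
      · linarith [key j]
      · exact_mod_cast hoff j i hji
  have hS0 : (0:ℚ) ≤ S := Finset.sum_nonneg hterm
  -- decompose S
  have hsplit : S = (∑ j, (Dl' j : ℚ) * (N j i : ℚ)) - lam * (∑ j, (F j : ℚ) * (N j i : ℚ))
      + (∑ j, K j * (N j i : ℚ)) + (∑ j, (N j i : ℚ)) := by
    rw [hS, Finset.mul_sum, ← Finset.sum_sub_distrib, ← Finset.sum_add_distrib,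
      ← Finset.sum_add_distrib]
    exact Finset.sum_congr rfl (fun j _ => by ring)
  -- the four sums
  have hT1 : (∑ j, (Dl' j : ℚ) * (N j i : ℚ)) ≤ 0 := by
    have h := hanti i hiexc
    have : ((interZ N Dl' i : ℤ) : ℚ) ≤ 0 := by exact_mod_cast h
    rw [interZ] at this
    push_cast at this
    exact this
  have hT2 : (∑ j, (F j : ℚ) * (N j i : ℚ)) = 0 := by
    have : ((interZ N F i : ℤ) : ℚ) = 0 := by exact_mod_cast hF0
    rw [interZ] at this
    push_cast at this
    exact this
  have hT3 : (∑ j, K j * (N j i : ℚ)) = -2 - (N i i : ℚ) := by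
    have := hKexc i hiexc
    linarith
  have hT4 : (∑ j, (N j i : ℚ)) = (N i i : ℚ) + (A.card : ℚ) := by
    rw [← Finset.add_sum_erase Finset.univ _ (Finset.mem_univ i)]
    congr 1
    have herase : ∀ j ∈ Finset.univ.erase i, (N j i : ℚ) = if N j i = 1 then 1 else 0 := by
      intro j hj
      rcases hoff01 j i (Finset.ne_of_mem_erase hj) with h | h <;> simp [h]
    have hsets : (Finset.univ.erase i).filter (fun j => N j i = 1) = A := by
      rw [hA]
      ext j
      simp [Finset.mem_erase, Finset.mem_filter, and_comm]
    rw [Finset.sum_congr rfl herase, Finset.sum_boole, hsets]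
  have hScard : S ≤ (A.card : ℚ) - 2 := by
    rw [hsplit, hT2, hT3, hT4]
    linarith
  -- card A ≥ 2 hence = 2, and S = 0
  have hA2 : A.card = 2 := by
    have : (2:ℚ) ≤ (A.card : ℚ) := by linarith
    have h2 : 2 ≤ A.card := by exact_mod_cast this
    omega
  have hSeq : S = 0 := by
    rw [hA2] at hScard
    push_cast at hScard
    linarith
  -- every term vanishes, so all neighbours of i lie in the support of Gl
  have hall := (Finset.sum_eq_zero_iff_of_nonneg hterm).1 hSeq.symm.symm
  have hsub : A ⊆ Finset.univ.filter (fun j => j ≠ i ∧ N j i = 1 ∧ Gl j = 1) := by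
    intro j hj
    rw [hA, Finset.mem_filter] at hj
    obtain ⟨-, hji, hNji⟩ := hj
    have h0 := hall j (Finset.mem_univ j)
    rw [hNji] at h0
    push_cast at h0
    have hGlj : lam * (F j : ℚ) = K j + 1 + (Dl' j : ℚ) := by linarith
    rw [Finset.mem_filter]
    exact ⟨Finset.mem_univ j, hji, hNji, by rw [hGl j, if_pos hGlj]⟩
  have := Finset.card_le_card hsub
  omega
end

section
/- Assume r = s, i.e. all components are exceptional (the case of an 𝔪-primary ideal). Let 0 ≤ λ' < λ be consecutive jumping values. If i ∈ supp G_λ is neither a rupture index nor dicritical (i.e. a(i) ≤ 2 and ρ_i = 0), then (⌈K − λF⌉ + G_λ)·E_i = 0. -/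
open scoped BigOperators

/-- **Proposition `Num_condition2`.** Assume `r = s` (the
`𝔪`-primary case).  If `i ∈ supp G_λ` is neither a rupture index nor dicritical
(`a(i) ≤ 2` and `ρ_i = 0`), then `(⌈K − λF⌉ + G_λ)·E_i = 0`. -/
theorem zero_intersection_at_non_rupture_non_dicritical
    (s r : ℕ) (hr : 1 ≤ r) (hrs : r ≤ s)
    (N : Matrix (Fin s) (Fin s) ℤ)
    (hsym : ∀ i j, N i j = N j i)
    (hoff : ∀ i j : Fin s, i ≠ j → 0 ≤ N i j)
    (hneg : ∀ x : Fin s → ℚ, (∀ i : Fin s, r ≤ (i : ℕ) → x i = 0) → x ≠ 0 →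
      (∑ i, ∑ j, x i * x j * (N i j : ℚ)) < 0)
    (hoff01 : ∀ i j : Fin s, i ≠ j → N i j = 0 ∨ N i j = 1)
    (hreqs : r = s)
    (F : Fin s → ℤ) (hF1 : ∀ i, 1 ≤ F i) (hFanti : Antinef r N F)
    (K : Fin s → ℚ) (hKaff : ∀ i : Fin s, r ≤ (i : ℕ) → K i = 0)
    (hKexc : ∀ i : Fin s, (i : ℕ) < r →
      (∑ j, K j * (N j i : ℚ)) + (N i i : ℚ) = -2)
    (lam' lam : ℚ) (hl0 : 0 ≤ lam') (hll : lam' < lam)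
    (Dl' : Fin s → ℤ)
    (hconsec : ∀ c : ℚ, lam' ≤ c → c < lam →
      IsAntinefClosure r N (fun i => (⌊c * (F i : ℚ) - K i⌋ : ℚ)) Dl')
    (Dl : Fin s → ℤ)
    (hDl : IsAntinefClosure r N (fun i => (⌊lam * (F i : ℚ) - K i⌋ : ℚ)) Dl)
    (hjump : Dl ≠ Dl')
    (Gl : Fin s → ℤ)
    (hGl : ∀ i, Gl i = if lam * (F i : ℚ) = K i + 1 + (Dl' i : ℚ) then 1 else 0)
    :
    ∀ i : Fin s, Gl i = 1 →
      (Finset.univ.filter (fun j => j ≠ i ∧ N j i = 1)).card ≤ 2 →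
      interZ N F i = 0 →
      interZ N (fun j => ⌈K j - lam * (F j : ℚ)⌉ + Gl j) i = 0 := by
  intro i hGi hcard hFi
  have hFpos : ∀ j : Fin s, (0 : ℚ) < (F j : ℚ) := by
    intro j
    have := hF1 j
    exact_mod_cast lt_of_lt_of_le one_pos (by exact_mod_cast this)
  -- basic fact: if an integer is strictly below lam*F j - K j, it is ≤ Dl' j
  have hA0 : ∀ (j : Fin s) (m : ℤ), (m : ℚ) < lam * F j - K j → m ≤ Dl' j := by
    intro j m hm
    set c : ℚ := max lam' (((m : ℚ) + K j) / (F j : ℚ)) with hc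
    have hc1 : lam' ≤ c := le_max_left _ _
    have hc2 : c < lam := by
      apply max_lt hll
      rw [div_lt_iff₀ (hFpos j)]
      linarith
    have h := (hconsec c hc1 hc2).2.1 j
    have h2 : (m : ℚ) ≤ c * F j - K j := by
      have h3 := le_max_right lam' (((m : ℚ) + K j) / (F j : ℚ))
      rw [div_le_iff₀ (hFpos j)] at h3
      rw [← hc] at h3
      linarith
    have h3 : m ≤ ⌊c * (F j : ℚ) - K j⌋ := Int.le_floor.mpr h2
    have h' : (⌊c * (F j : ℚ) - K j⌋ : ℚ) ≤ (Dl' j : ℚ) := h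
    have h4 : ⌊c * (F j : ℚ) - K j⌋ ≤ Dl' j := by exact_mod_cast h'
    omega
  have hGval : ∀ j, Gl j = 0 ∨ Gl j = 1 := by
    intro j; rw [hGl]; split <;> simp
  -- the defining condition at indices in the support of G
  have hsupp : ∀ j : Fin s, Gl j = 1 → lam * F j - K j = 1 + (Dl' j : ℚ) := by
    intro j hj
    rw [hGl] at hj
    by_contra h
    have : lam * (F j : ℚ) ≠ K j + 1 + (Dl' j : ℚ) := by
      intro he; apply h; rw [he]; ring
    simp [this] at hj
  -- key lower bound on Dl'
  have hL1 : ∀ j : Fin s, ⌊lam * (F j : ℚ) - K j⌋ ≤ Dl' j + Gl j := by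
    intro j
    rcases hGval j with hg | hg
    · rw [hg, add_zero]
      by_cases hint : ∃ m : ℤ, lam * (F j : ℚ) - K j = (m : ℚ)
      · obtain ⟨m, hm⟩ := hint
        have hfl : ⌊lam * (F j : ℚ) - K j⌋ = m := by rw [hm]; exact Int.floor_intCast m
        have hne : m ≠ Dl' j + 1 := by
          intro he
          have : lam * (F j : ℚ) = K j + 1 + (Dl' j : ℚ) := by
            rw [he] at hm; push_cast at hm; linarith
          rw [hGl, if_pos this] at hg; exact one_ne_zero hg
        have := hA0 j (m - 1) (by rw [hm]; push_cast; linarith)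
        omega
      · have hlt : (⌊lam * (F j : ℚ) - K j⌋ : ℚ) < lam * (F j : ℚ) - K j := by
          rcases lt_or_eq_of_le (Int.floor_le (lam * (F j : ℚ) - K j)) with h | h
          · exact h
          · exact absurd ⟨⌊lam * (F j : ℚ) - K j⌋, h.symm⟩ hint
        exact hA0 j _ hlt
    · have hm := hsupp j hg
      rw [hg, hm]
      have : (1 : ℚ) + (Dl' j : ℚ) = ((Dl' j + 1 : ℤ) : ℚ) := by push_cast; ring
      rw [this, Int.floor_intCast]
  -- rewrite the divisor ⌈K - λF⌉ + G
  set A : Fin s → ℤ := fun j => ⌈K j - lam * (F j : ℚ)⌉ + Gl j with hA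
  have hAform : ∀ j, A j = Gl j - ⌊lam * (F j : ℚ) - K j⌋ := by
    intro j
    have heq : K j - lam * (F j : ℚ) = -(lam * (F j : ℚ) - K j) := by ring
    simp only [hA, heq, Int.ceil_neg]
    ring
  have hL1' : ∀ j, -Dl' j ≤ A j := by
    intro j; rw [hAform j]; have := hL1 j; omega
  have hfli : ⌊lam * (F i : ℚ) - K i⌋ = Dl' i + 1 := by
    rw [hsupp i hGi]
    have : (1 : ℚ) + (Dl' i : ℚ) = ((Dl' i + 1 : ℤ) : ℚ) := by push_cast; ring
    rw [this, Int.floor_intCast]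
  have hL3 : A i = -Dl' i := by rw [hAform i, hfli, hGi]; ring
  -- upper bound in ℚ
  have hL2 : ∀ j, (A j : ℚ) ≤ K j - lam * (F j : ℚ) + 1 := by
    intro j
    rw [hAform j]
    rcases hGval j with hg | hg
    · rw [hg]
      have := Int.sub_one_lt_floor (lam * (F j : ℚ) - K j)
      push_cast
      linarith
    · rw [hg]
      have hm := hsupp j hg
      have hfl : (⌊lam * (F j : ℚ) - K j⌋ : ℚ) = 1 + (Dl' j : ℚ) := by
        rw [hm]
        have : (1 : ℚ) + (Dl' j : ℚ) = ((Dl' j + 1 : ℤ) : ℚ) := by push_cast; ring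
        rw [this, Int.floor_intCast]
      push_cast
      linarith
  have hL2i : (A i : ℚ) = K i - lam * (F i : ℚ) + 1 := by
    rw [hL3]
    have hm := hsupp i hGi
    push_cast
    linarith
  have iLt : (i : ℕ) < r := by rw [hreqs]; exact i.isLt
  -- lower bound : 0 ≤ interZ N A i
  have hanti : interZ N Dl' i ≤ 0 := (hconsec lam' le_rfl hll).1 i iLt
  have hlow : 0 ≤ interZ N A i := by
    have h1 : ∑ j, (-Dl' j) * N j i ≤ ∑ j, A j * N j i := by
      apply Finset.sum_le_sum
      intro j _
      by_cases hji : j = i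
      · subst hji; rw [hL3]
      · exact mul_le_mul_of_nonneg_right (hL1' j) (hoff j i hji)
    have h2 : ∑ j, (-Dl' j) * N j i = -interZ N Dl' i := by
      simp [interZ, neg_mul, Finset.sum_neg_distrib]
    have h3 : interZ N A i = ∑ j, A j * N j i := rfl
    rw [h3]; rw [h2] at h1; linarith
  -- upper bound : interZ N A i ≤ 0 (via ℚ)
  have hsumN : ∑ j, N j i ≤ N i i + 2 := by
    have hrw : ∑ j, N j i = N i i + ∑ j ∈ Finset.univ.erase i, N j i := by
      rw [← Finset.add_sum_erase _ _ (Finset.mem_univ i)]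
    have hfe : (Finset.univ.filter (fun j => j ≠ i ∧ N j i = 1))
        = (Finset.univ.erase i).filter (fun j => N j i = 1) := by
      ext j; simp [Finset.mem_erase, and_comm]
    have hS : ∑ j ∈ Finset.univ.erase i, N j i
        = (((Finset.univ.erase i).filter (fun j => N j i = 1)).card : ℤ) := by
      rw [Finset.card_filter]
      push_cast
      refine Finset.sum_congr rfl fun j hj => ?_
      have hji : j ≠ i := Finset.ne_of_mem_erase hj
      rcases hoff01 j i hji with h | h <;> simp [h]
    have hc2 : (((Finset.univ.erase i).filter (fun j => N j i = 1)).card : ℤ) ≤ 2 := by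
      rw [← hfe]; exact_mod_cast hcard
    omega
  have hupQ : ((interZ N A i : ℤ) : ℚ) ≤ 0 := by
    have hcast : ((interZ N A i : ℤ) : ℚ) = ∑ j, (A j : ℚ) * (N j i : ℚ) := by
      simp [interZ]
    have h1 : ∑ j, (A j : ℚ) * (N j i : ℚ)
        ≤ ∑ j, (K j - lam * (F j : ℚ) + 1) * (N j i : ℚ) := by
      apply Finset.sum_le_sum
      intro j _
      by_cases hji : j = i
      · subst hji; rw [hL2i]
      · have hN : (0 : ℚ) ≤ (N j i : ℚ) := by exact_mod_cast hoff j i hji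
        exact mul_le_mul_of_nonneg_right (hL2 j) hN
    have h2 : ∑ j, (K j - lam * (F j : ℚ) + 1) * (N j i : ℚ)
        = (∑ j, K j * (N j i : ℚ)) - lam * (∑ j, (F j : ℚ) * (N j i : ℚ))
          + ∑ j, (N j i : ℚ) := by
      rw [Finset.mul_sum, ← Finset.sum_sub_distrib, ← Finset.sum_add_distrib]
      exact Finset.sum_congr rfl fun j _ => by ring
    have hFE : ∑ j, (F j : ℚ) * (N j i : ℚ) = 0 := by
      have h0 : ((interZ N F i : ℤ) : ℚ) = 0 := by rw [hFi]; norm_num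
      simpa [interZ] using h0
    have hKE : ∑ j, K j * (N j i : ℚ) = -2 - (N i i : ℚ) := by
      have := hKexc i iLt; linarith
    have hNE : ∑ j, (N j i : ℚ) ≤ (N i i : ℚ) + 2 := by exact_mod_cast hsumN
    rw [hcast]
    calc ∑ j, (A j : ℚ) * (N j i : ℚ)
        ≤ (∑ j, K j * (N j i : ℚ)) - lam * (∑ j, (F j : ℚ) * (N j i : ℚ))
          + ∑ j, (N j i : ℚ) := by rw [← h2]; exact h1
      _ ≤ 0 := by rw [hFE, hKE]; linarith
  have hup : interZ N A i ≤ 0 := by exact_mod_cast hupQ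
  have hfinal : interZ N (fun j => ⌈K j - lam * (F j : ℚ)⌉ + Gl j) i = interZ N A i := rfl
  rw [hfinal]
  omega
end

section
/- Let 0 ≤ λ' < λ be consecutive jumping values, let G be a candidate divisor for λ that contributes to λ, and let D be the antinef closure of ⌊λF − K⌋ − G. Then G_D ≤ G, i.e. S_D ⊆ supp G. -/
open scoped BigOperators

/-- **Proposition `G_DleqG`.** Let `G` be a candidate divisor for the
jumping number `λ` that contributes to `λ`, and let `D` be the antinef closure of
`⌊λF − K⌋ − G`.  Then `G_D ≤ G`, i.e. `S_D ⊆ supp G`. -/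
theorem support_of_closure_le_contributing
    (s r : ℕ) (hr : 1 ≤ r) (hrs : r ≤ s)
    (N : Matrix (Fin s) (Fin s) ℤ)
    (hsym : ∀ i j, N i j = N j i)
    (hoff : ∀ i j : Fin s, i ≠ j → 0 ≤ N i j)
    (hneg : ∀ x : Fin s → ℚ, (∀ i : Fin s, r ≤ (i : ℕ) → x i = 0) → x ≠ 0 →
      (∑ i, ∑ j, x i * x j * (N i j : ℚ)) < 0)
    (F : Fin s → ℤ) (hF1 : ∀ i, 1 ≤ F i) (hFanti : Antinef r N F)
    (K : Fin s → ℚ) (hKaff : ∀ i : Fin s, r ≤ (i : ℕ) → K i = 0)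
    (hKexc : ∀ i : Fin s, (i : ℕ) < r →
      (∑ j, K j * (N j i : ℚ)) + (N i i : ℚ) = -2)
    (lam' lam : ℚ) (hl0 : 0 ≤ lam') (hll : lam' < lam)
    (Dl' : Fin s → ℤ)
    (hconsec : ∀ c : ℚ, lam' ≤ c → c < lam →
      IsAntinefClosure r N (fun i => (⌊c * (F i : ℚ) - K i⌋ : ℚ)) Dl')
    (Dl : Fin s → ℤ)
    (hDl : IsAntinefClosure r N (fun i => (⌊lam * (F i : ℚ) - K i⌋ : ℚ)) Dl)
    (hjump : Dl ≠ Dl')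
    (G : Fin s → ℤ) (hGred : ∀ i, G i = 0 ∨ G i = 1)
    (hGcand : ∀ i, G i = 1 → ∃ m : ℤ, 0 < m ∧ lam * (F i : ℚ) - K i = (m : ℚ))
    (D : Fin s → ℤ)
    (hD : IsAntinefClosure r N (fun i => ((⌊lam * (F i : ℚ) - K i⌋ - G i : ℤ) : ℚ)) D)
    (hDne : D ≠ Dl)
    (lamD : ℚ)
    (hlamD_le : ∀ i, lamD ≤ (K i + 1 + (D i : ℚ)) / (F i : ℚ))
    (hlamD_mem : ∃ i, lamD = (K i + 1 + (D i : ℚ)) / (F i : ℚ)) :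
    ∀ i, lamD * (F i : ℚ) = K i + 1 + (D i : ℚ) → G i = 1 := by
  intro i hi
  by_contra hGi
  have hG0 : G i = 0 := (hGred i).resolve_right hGi
  have hFi : (0 : ℚ) < (F i : ℚ) := by exact_mod_cast lt_of_lt_of_le one_pos (hF1 i)
  -- D i is at least the floor at i since G i = 0
  have h1 : (⌊lam * (F i : ℚ) - K i⌋ : ℚ) ≤ (D i : ℚ) := by
    have := hD.2.1 i
    simp only [hG0] at this
    push_cast at this
    linarith
  -- lam < lamD
  have h2 : lam < lamD := by
    have hfl : lam * (F i : ℚ) - K i - 1 < (⌊lam * (F i : ℚ) - K i⌋ : ℚ) :=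
      Int.sub_one_lt_floor _
    have hlt : lam * (F i : ℚ) < lamD * (F i : ℚ) := by
      rw [hi]; linarith
    exact lt_of_mul_lt_mul_right hlt hFi.le
  -- hence D dominates ⌊lam F - K⌋ everywhere
  have h3 : ∀ j, (⌊lam * (F j : ℚ) - K j⌋ : ℚ) ≤ (D j : ℚ) := by
    intro j
    have hFj : (0 : ℚ) < (F j : ℚ) := by exact_mod_cast lt_of_lt_of_le one_pos (hF1 j)
    have h4 : lamD * (F j : ℚ) ≤ K j + 1 + (D j : ℚ) :=
      (le_div_iff₀ hFj).mp (hlamD_le j)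
    have h5 : lam * (F j : ℚ) < K j + 1 + (D j : ℚ) :=
      lt_of_lt_of_le ((mul_lt_mul_iff_of_pos_right hFj).mpr h2) h4
    have h6 : ⌊lam * (F j : ℚ) - K j⌋ < D j + 1 :=
      Int.floor_lt.mpr (by push_cast; linarith)
    have h7 : ⌊lam * (F j : ℚ) - K j⌋ ≤ D j := by omega
    exact_mod_cast h7
  have hDlD : ∀ j, Dl j ≤ D j := hDl.2.2 D hD.1 h3
  have hDDl : ∀ j, D j ≤ Dl j := by
    refine hD.2.2 Dl hDl.1 fun j => ?_
    have hg : (0 : ℤ) ≤ G j := by rcases hGred j with h | h <;> omega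
    have := hDl.2.1 j
    push_cast at this ⊢
    linarith [(by exact_mod_cast hg : (0:ℚ) ≤ (G j : ℚ))]
  exact hDne (funext fun j => le_antisymm (hDDl j) (hDlD j))
end

section
/- Let D' be an integral antinef divisor and set λ := λ_{D'}. Let D be the antinef closure of ⌊λF − K⌋ − G_{D'}. Then D ≤ D', λ_D = λ_{D'}, S_D = S_{D'} and G_D = G_{D'}. -/
open scoped BigOperators

/-- **Proposition `Prop3`.** Let `λ = λ_{D'}` be the jumping number
associated to an integral antinef divisor `D'`, and let `D` be the antinef closure
of `⌊λF − K⌋ − G_{D'}`.  Then `D ≤ D'`, `λ_D = λ_{D'}`, `S_D = S_{D'}` and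
`G_D = G_{D'}`. -/
theorem closure_of_associated_contributing_divisor
    (s r : ℕ) (hr : 1 ≤ r) (hrs : r ≤ s)
    (N : Matrix (Fin s) (Fin s) ℤ)
    (hsym : ∀ i j, N i j = N j i)
    (hoff : ∀ i j : Fin s, i ≠ j → 0 ≤ N i j)
    (hneg : ∀ x : Fin s → ℚ, (∀ i : Fin s, r ≤ (i : ℕ) → x i = 0) → x ≠ 0 →
      (∑ i, ∑ j, x i * x j * (N i j : ℚ)) < 0)
    (F : Fin s → ℤ) (hF1 : ∀ i, 1 ≤ F i) (hFanti : Antinef r N F)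
    (K : Fin s → ℚ) (hKaff : ∀ i : Fin s, r ≤ (i : ℕ) → K i = 0)
    (hKexc : ∀ i : Fin s, (i : ℕ) < r →
      (∑ j, K j * (N j i : ℚ)) + (N i i : ℚ) = -2)
    (D' : Fin s → ℤ) (hD'anti : Antinef r N D')
    (lam : ℚ)
    (hlam_le : ∀ i, lam ≤ (K i + 1 + (D' i : ℚ)) / (F i : ℚ))
    (hlam_mem : ∃ i, lam = (K i + 1 + (D' i : ℚ)) / (F i : ℚ))
    (GD' : Fin s → ℤ)
    (hGD' : ∀ i, GD' i = if lam * (F i : ℚ) = K i + 1 + (D' i : ℚ) then 1 else 0)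
    (D : Fin s → ℤ)
    (hD : IsAntinefClosure r N
      (fun i => ((⌊lam * (F i : ℚ) - K i⌋ - GD' i : ℤ) : ℚ)) D) :
    D ≤ D' ∧
      (∀ i, lam ≤ (K i + 1 + (D i : ℚ)) / (F i : ℚ)) ∧
      (∃ i, lam = (K i + 1 + (D i : ℚ)) / (F i : ℚ)) ∧
      (∀ i, lam * (F i : ℚ) = K i + 1 + (D i : ℚ) ↔
        lam * (F i : ℚ) = K i + 1 + (D' i : ℚ)) ∧
      (fun i => if lam * (F i : ℚ) = K i + 1 + (D i : ℚ) then (1 : ℤ) else 0) = GD' := by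
  obtain ⟨hDanti, hDge, hDmin⟩ := hD
  have hFpos : ∀ i, (0:ℚ) < (F i : ℚ) := fun i => by
    have : (1:ℚ) ≤ (F i : ℚ) := by exact_mod_cast hF1 i
    linarith
  have hle : ∀ i, lam * (F i : ℚ) ≤ K i + 1 + (D' i : ℚ) := fun i =>
    (le_div_iff₀ (hFpos i)).mp (hlam_le i)
  have hfleq : ∀ i, lam * (F i : ℚ) = K i + 1 + (D' i : ℚ) →
      ⌊lam * (F i : ℚ) - K i⌋ = D' i + 1 := by
    intro i h
    have : lam * (F i : ℚ) - K i = ((D' i + 1 : ℤ) : ℚ) := by push_cast; linarith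
    rw [this, Int.floor_intCast]
  have hfloor_le : ∀ i, ⌊lam * (F i : ℚ) - K i⌋ - GD' i ≤ D' i := by
    intro i
    by_cases h : lam * (F i : ℚ) = K i + 1 + (D' i : ℚ)
    · rw [hGD' i, if_pos h, hfleq i h]; omega
    · rw [hGD' i, if_neg h]
      have hlt : lam * (F i : ℚ) - K i < ((D' i + 1 : ℤ) : ℚ) := by
        have := lt_of_le_of_ne (hle i) h
        push_cast; linarith
      have := Int.floor_lt.mpr hlt
      omega
  have hDle : ∀ i, D i ≤ D' i :=
    hDmin D' hD'anti (fun i => Int.cast_le.mpr (hfloor_le i))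
  have hDgeZ : ∀ i, ⌊lam * (F i : ℚ) - K i⌋ - GD' i ≤ D i := fun i =>
    Int.cast_le.mp (hDge i)
  have heq : ∀ i, lam * (F i : ℚ) = K i + 1 + (D' i : ℚ) →
      D i = D' i ∧ lam * (F i : ℚ) = K i + 1 + (D i : ℚ) := by
    intro i h
    have h1 := hDgeZ i
    rw [hGD' i, if_pos h, hfleq i h] at h1
    have hEq : D i = D' i := le_antisymm (hDle i) (by omega)
    exact ⟨hEq, by rw [hEq]; exact h⟩
  have hstrict : ∀ i, lam * (F i : ℚ) ≠ K i + 1 + (D' i : ℚ) →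
      lam * (F i : ℚ) < K i + 1 + (D i : ℚ) := by
    intro i h
    have h1 := hDgeZ i
    rw [hGD' i, if_neg h] at h1
    have h2 : lam * (F i : ℚ) - K i - 1 < (⌊lam * (F i : ℚ) - K i⌋ : ℚ) := by
      have := Int.sub_one_lt_floor (lam * (F i : ℚ) - K i)
      linarith
    have h3 : ((⌊lam * (F i : ℚ) - K i⌋ : ℤ) : ℚ) ≤ (D i : ℚ) := by
      exact_mod_cast (by omega : ⌊lam * (F i : ℚ) - K i⌋ ≤ D i)
    linarith
  have hle2 : ∀ i, lam * (F i : ℚ) ≤ K i + 1 + (D i : ℚ) := by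
    intro i
    by_cases h : lam * (F i : ℚ) = K i + 1 + (D' i : ℚ)
    · exact le_of_eq (heq i h).2
    · exact le_of_lt (hstrict i h)
  have hiff : ∀ i, (lam * (F i : ℚ) = K i + 1 + (D i : ℚ) ↔
      lam * (F i : ℚ) = K i + 1 + (D' i : ℚ)) := by
    intro i
    constructor
    · intro h
      by_contra h'
      exact absurd h (ne_of_lt (hstrict i h'))
    · intro h; exact (heq i h).2
  refine ⟨fun i => hDle i, fun i => (le_div_iff₀ (hFpos i)).mpr (hle2 i), ?_, hiff, ?_⟩
  · obtain ⟨i, hi⟩ := hlam_mem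
    have h : lam * (F i : ℚ) = K i + 1 + (D' i : ℚ) := by
      rw [hi, div_mul_cancel₀ _ (hFpos i).ne']
    exact ⟨i, (eq_div_iff (hFpos i).ne').mpr ((heq i h).2)⟩
  · funext i
    rw [hGD' i]
    by_cases h : lam * (F i : ℚ) = K i + 1 + (D' i : ℚ)
    · rw [if_pos h, if_pos ((hiff i).mpr h)]
    · rw [if_neg h, if_neg (fun hc => h ((hiff i).mp hc))]
end

section
/- Let 0 ≤ λ' < λ be consecutive jumping values, let G be a candidate divisor for λ that contributes to λ, and let D be the antinef closure of ⌊λF − K⌋ − G. Then: (a) the antinef closure of ⌊λF − K⌋ − G_D also equals D; (b) every candidate divisor G' for λ such that the antinef closure of ⌊λF − K⌋ − G' equals D satisfies G_D ≤ G'; and (c) for every reduced divisor G' with G' ≤ G_D and G' ≠ G_D, the antinef closure C' of ⌊λF − K⌋ − G' satisfies D < C' (i.e. D ≤ C' and D ≠ C'). In other words, G_D is the minimal contributing divisor associated to λ defining the same complete ideal as G. -/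
open scoped BigOperators

/-- **Theorem `minimal_contributing`.** Let `G` be a candidate divisor
contributing to the jumping number `λ` and `D` the antinef closure of `⌊λF − K⌋ − G`.
Then: (a) the antinef closure of `⌊λF − K⌋ − G_D` is also `D`; (b) any candidate
divisor `G'` for `λ` whose associated closure equals `D` satisfies `G_D ≤ G'`;
(c) any proper reduced subdivisor `G' < G_D` defines a strictly larger closure
`C' > D`. -/
theorem minimal_contributing_divisor
    (s r : ℕ) (hr : 1 ≤ r) (hrs : r ≤ s)
    (N : Matrix (Fin s) (Fin s) ℤ)
    (hsym : ∀ i j, N i j = N j i)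
    (hoff : ∀ i j : Fin s, i ≠ j → 0 ≤ N i j)
    (hneg : ∀ x : Fin s → ℚ, (∀ i : Fin s, r ≤ (i : ℕ) → x i = 0) → x ≠ 0 →
      (∑ i, ∑ j, x i * x j * (N i j : ℚ)) < 0)
    (F : Fin s → ℤ) (hF1 : ∀ i, 1 ≤ F i) (hFanti : Antinef r N F)
    (K : Fin s → ℚ) (hKaff : ∀ i : Fin s, r ≤ (i : ℕ) → K i = 0)
    (hKexc : ∀ i : Fin s, (i : ℕ) < r →
      (∑ j, K j * (N j i : ℚ)) + (N i i : ℚ) = -2)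
    (lam' lam : ℚ) (hl0 : 0 ≤ lam') (hll : lam' < lam)
    (Dl' : Fin s → ℤ)
    (hconsec : ∀ c : ℚ, lam' ≤ c → c < lam →
      IsAntinefClosure r N (fun i => (⌊c * (F i : ℚ) - K i⌋ : ℚ)) Dl')
    (Dl : Fin s → ℤ)
    (hDl : IsAntinefClosure r N (fun i => (⌊lam * (F i : ℚ) - K i⌋ : ℚ)) Dl)
    (hjump : Dl ≠ Dl')
    (G : Fin s → ℤ) (hGred : ∀ i, G i = 0 ∨ G i = 1)
    (hGcand : ∀ i, G i = 1 → ∃ m : ℤ, 0 < m ∧ lam * (F i : ℚ) - K i = (m : ℚ))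
    (D : Fin s → ℤ)
    (hD : IsAntinefClosure r N (fun i => ((⌊lam * (F i : ℚ) - K i⌋ - G i : ℤ) : ℚ)) D)
    (hDne : D ≠ Dl)
    (lamD : ℚ)
    (hlamD_le : ∀ i, lamD ≤ (K i + 1 + (D i : ℚ)) / (F i : ℚ))
    (hlamD_mem : ∃ i, lamD = (K i + 1 + (D i : ℚ)) / (F i : ℚ))
    (GD : Fin s → ℤ)
    (hGD : ∀ i, GD i = if lamD * (F i : ℚ) = K i + 1 + (D i : ℚ) then 1 else 0) :
    IsAntinefClosure r N (fun i => ((⌊lam * (F i : ℚ) - K i⌋ - GD i : ℤ) : ℚ)) D ∧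
      (∀ G' : Fin s → ℤ, (∀ i, G' i = 0 ∨ G' i = 1) →
        (∀ i, G' i = 1 → ∃ m : ℤ, 0 < m ∧ lam * (F i : ℚ) - K i = (m : ℚ)) →
        IsAntinefClosure r N (fun i => ((⌊lam * (F i : ℚ) - K i⌋ - G' i : ℤ) : ℚ)) D →
        GD ≤ G') ∧
      (∀ G' : Fin s → ℤ, (∀ i, G' i = 0 ∨ G' i = 1) → G' ≤ GD → G' ≠ GD →
        ∀ C' : Fin s → ℤ,
          IsAntinefClosure r N
            (fun i => ((⌊lam * (F i : ℚ) - K i⌋ - G' i : ℤ) : ℚ)) C' →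
          D ≤ C' ∧ D ≠ C') := by
  classical
  have hFQ : ∀ i, (0 : ℚ) < (F i : ℚ) := by
    intro i
    have : (1 : ℚ) ≤ (F i : ℚ) := by exact_mod_cast hF1 i
    linarith
  have hlamD_le' : ∀ i, lamD * (F i : ℚ) ≤ K i + 1 + (D i : ℚ) := by
    intro i
    have h := hlamD_le i
    rwa [le_div_iff₀ (hFQ i)] at h
  have hDgeZ : ∀ i, ⌊lam * (F i : ℚ) - K i⌋ - G i ≤ D i := by
    intro i
    have h : ((⌊lam * (F i : ℚ) - K i⌋ - G i : ℤ) : ℚ) ≤ (D i : ℚ) := hD.2.1 i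
    exact_mod_cast h
  -- λ·F i ≤ K i + 1 + D i for every i
  have key1 : ∀ i, lam * (F i : ℚ) ≤ K i + 1 + (D i : ℚ) := by
    intro i
    rcases hGred i with h0 | h1
    · have h2 : ⌊lam * (F i : ℚ) - K i⌋ ≤ D i := by have := hDgeZ i; omega
      have h3 : lam * (F i : ℚ) - K i < (⌊lam * (F i : ℚ) - K i⌋ : ℚ) + 1 :=
        Int.lt_floor_add_one _
      have h4 : ((⌊lam * (F i : ℚ) - K i⌋ : ℤ) : ℚ) ≤ (D i : ℚ) := by exact_mod_cast h2
      linarith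
    · obtain ⟨m, hm0, hm⟩ := hGcand i h1
      have hfm : ⌊lam * (F i : ℚ) - K i⌋ = m := by rw [hm, Int.floor_intCast]
      have h2 : m - 1 ≤ D i := by have := hDgeZ i; omega
      have h3 : (m : ℚ) - 1 ≤ (D i : ℚ) := by exact_mod_cast h2
      linarith [hm]
  have lam_le : lam ≤ lamD := by
    obtain ⟨i0, hi0⟩ := hlamD_mem
    rw [hi0, le_div_iff₀ (hFQ i0)]
    exact key1 i0
  -- if λ < λD then D = Dλ, contradiction
  have lamD_le : lamD ≤ lam := by
    by_contra hcon
    push_neg at hcon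
    have hfd : ∀ i, ⌊lam * (F i : ℚ) - K i⌋ ≤ D i := by
      intro i
      have h1 : lam * (F i : ℚ) < lamD * (F i : ℚ) :=
        mul_lt_mul_of_pos_right hcon (hFQ i)
      have h2 : lam * (F i : ℚ) - K i < ((D i + 1 : ℤ) : ℚ) := by
        push_cast
        linarith [hlamD_le' i]
      have := Int.floor_lt.mpr h2
      omega
    have hDlD : ∀ i, Dl i ≤ D i := by
      refine hDl.2.2 D hD.1 ?_
      intro i
      show ((⌊lam * (F i : ℚ) - K i⌋ : ℤ) : ℚ) ≤ (D i : ℚ)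
      exact_mod_cast hfd i
    have hDDl : ∀ i, D i ≤ Dl i := by
      refine hD.2.2 Dl hDl.1 ?_
      intro i
      have hG0 : (0 : ℚ) ≤ (G i : ℚ) := by
        rcases hGred i with h | h <;> simp [h]
      have h1 : ((⌊lam * (F i : ℚ) - K i⌋ : ℤ) : ℚ) ≤ (Dl i : ℚ) := hDl.2.1 i
      show ((⌊lam * (F i : ℚ) - K i⌋ - G i : ℤ) : ℚ) ≤ (Dl i : ℚ)
      push_cast
      push_cast at h1
      linarith
    exact hDne (funext fun i => le_antisymm (hDDl i) (hDlD i))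
  have heq : lamD = lam := le_antisymm lamD_le lam_le
  -- case analysis on membership in S_D
  have hGDcases : ∀ i, (GD i = 1 ∧ lam * (F i : ℚ) = K i + 1 + (D i : ℚ)) ∨
      (GD i = 0 ∧ lam * (F i : ℚ) < K i + 1 + (D i : ℚ)) := by
    intro i
    have hgd := hGD i
    rw [heq] at hgd
    by_cases h : lam * (F i : ℚ) = K i + 1 + (D i : ℚ)
    · left; exact ⟨by rw [hgd, if_pos h], h⟩
    · right
      refine ⟨by rw [hgd, if_neg h], ?_⟩
      have := hlamD_le' i
      rw [heq] at this
      exact lt_of_le_of_ne this h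
  have hfS : ∀ i, lam * (F i : ℚ) = K i + 1 + (D i : ℚ) →
      ⌊lam * (F i : ℚ) - K i⌋ = D i + 1 := by
    intro i hi
    have h : lam * (F i : ℚ) - K i = ((D i + 1 : ℤ) : ℚ) := by push_cast; linarith
    rw [h, Int.floor_intCast]
  have hfnot : ∀ i, lam * (F i : ℚ) < K i + 1 + (D i : ℚ) →
      ⌊lam * (F i : ℚ) - K i⌋ ≤ D i := by
    intro i hi
    have h2 : lam * (F i : ℚ) - K i < ((D i + 1 : ℤ) : ℚ) := by push_cast; linarith
    have := Int.floor_lt.mpr h2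
    omega
  have hGS : ∀ i, lam * (F i : ℚ) = K i + 1 + (D i : ℚ) → G i = 1 := by
    intro i hi
    have h1 := hfS i hi
    have h2 := hDgeZ i
    rcases hGred i with h | h <;> omega
  -- D dominates ⌊λF−K⌋ − G_D
  have hDdom : ∀ i, ((⌊lam * (F i : ℚ) - K i⌋ - GD i : ℤ) : ℚ) ≤ (D i : ℚ) := by
    intro i
    rcases hGDcases i with ⟨h1, hS⟩ | ⟨h0, hlt⟩
    · have := hfS i hS
      exact_mod_cast (by omega : ⌊lam * (F i : ℚ) - K i⌋ - GD i ≤ D i)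
    · have := hfnot i hlt
      exact_mod_cast (by omega : ⌊lam * (F i : ℚ) - K i⌋ - GD i ≤ D i)
  -- key lemma: anything dominating ⌊λF−K⌋ − G_D dominates ⌊λF−K⌋ − G
  have KL : ∀ C : Fin s → ℤ, (∀ i, ((⌊lam * (F i : ℚ) - K i⌋ - GD i : ℤ) : ℚ) ≤ (C i : ℚ)) →
      ∀ i, ((⌊lam * (F i : ℚ) - K i⌋ - G i : ℤ) : ℚ) ≤ (C i : ℚ) := by
    intro C hC i
    have hC' : ⌊lam * (F i : ℚ) - K i⌋ - GD i ≤ C i := by exact_mod_cast hC i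
    rcases hGDcases i with ⟨h1, hS⟩ | ⟨h0, hlt⟩
    · have hg := hGS i hS
      exact_mod_cast (by omega : ⌊lam * (F i : ℚ) - K i⌋ - G i ≤ C i)
    · have hG0 : 0 ≤ G i := by rcases hGred i with h | h <;> omega
      exact_mod_cast (by omega : ⌊lam * (F i : ℚ) - K i⌋ - G i ≤ C i)
  refine ⟨⟨hD.1, hDdom, ?_⟩, ?_, ?_⟩
  · -- minimality in part (a)
    intro C hCanti hC
    exact hD.2.2 C hCanti (KL C hC)
  · -- part (b)
    intro G' hG'red hG'cand hG'cl i
    show GD i ≤ G' i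
    rcases hGDcases i with ⟨h1, hS⟩ | ⟨h0, hlt⟩
    · have hfi := hfS i hS
      have h2 : ⌊lam * (F i : ℚ) - K i⌋ - G' i ≤ D i := by
        have h : ((⌊lam * (F i : ℚ) - K i⌋ - G' i : ℤ) : ℚ) ≤ (D i : ℚ) := hG'cl.2.1 i
        exact_mod_cast h
      rcases hG'red i with h | h <;> omega
    · have : 0 ≤ G' i := by rcases hG'red i with h | h <;> omega
      omega
  · -- part (c)
    intro G' hG'red hle hne C' hC'
    have hdom : ∀ i, ((⌊lam * (F i : ℚ) - K i⌋ - GD i : ℤ) : ℚ) ≤ (C' i : ℚ) := by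
      intro i
      have h1 : ((⌊lam * (F i : ℚ) - K i⌋ - G' i : ℤ) : ℚ) ≤ (C' i : ℚ) := hC'.2.1 i
      have h2 : G' i ≤ GD i := hle i
      have h3 : ((⌊lam * (F i : ℚ) - K i⌋ - GD i : ℤ) : ℚ) ≤
          ((⌊lam * (F i : ℚ) - K i⌋ - G' i : ℤ) : ℚ) := by
        exact_mod_cast (by omega : ⌊lam * (F i : ℚ) - K i⌋ - GD i ≤
          ⌊lam * (F i : ℚ) - K i⌋ - G' i)
      linarith
    have hDC : D ≤ C' := hD.2.2 C' hC'.1 (KL C' hdom)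
    refine ⟨hDC, ?_⟩
    obtain ⟨i0, hi0⟩ := Function.ne_iff.mp hne
    have hGD1 : GD i0 = 1 ∧ lam * (F i0 : ℚ) = K i0 + 1 + (D i0 : ℚ) := by
      rcases hGDcases i0 with h | ⟨h0, _⟩
      · exact h
      · exfalso
        have hx : G' i0 ≤ GD i0 := hle i0
        rcases hG'red i0 with h | h <;> omega
    have hG'0 : G' i0 = 0 := by
      have hx : G' i0 ≤ GD i0 := hle i0
      rcases hG'red i0 with h | h
      · exact h
      · exfalso; exact hi0 (by omega)
    have hfi0 : ⌊lam * (F i0 : ℚ) - K i0⌋ = D i0 + 1 := hfS i0 hGD1.2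
    have hC'big : ⌊lam * (F i0 : ℚ) - K i0⌋ - G' i0 ≤ C' i0 := by
      have h : ((⌊lam * (F i0 : ℚ) - K i0⌋ - G' i0 : ℤ) : ℚ) ≤ (C' i0 : ℚ) := hC'.2.1 i0
      exact_mod_cast h
    intro hDeq
    have : D i0 = C' i0 := congrFun hDeq i0
    omega
end

section
/- Let 0 ≤ λ' < λ be consecutive jumping values and let D be an integral antinef divisor with λ_D = λ. Then G_D ≤ G_λ, i.e. S_D ⊆ supp G_λ. -/
open scoped BigOperators

/-- **Proposition `min_min`.** For consecutive jumping values
`0 ≤ λ' < λ` and any integral antinef divisor `D` with `λ_D = λ`, one has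
`G_D ≤ G_λ`, i.e. `S_D ⊆ supp G_λ`. -/
theorem support_le_minimal_jumping_divisor
    (s r : ℕ) (hr : 1 ≤ r) (hrs : r ≤ s)
    (N : Matrix (Fin s) (Fin s) ℤ)
    (hsym : ∀ i j, N i j = N j i)
    (hoff : ∀ i j : Fin s, i ≠ j → 0 ≤ N i j)
    (hneg : ∀ x : Fin s → ℚ, (∀ i : Fin s, r ≤ (i : ℕ) → x i = 0) → x ≠ 0 →
      (∑ i, ∑ j, x i * x j * (N i j : ℚ)) < 0)
    (F : Fin s → ℤ) (hF1 : ∀ i, 1 ≤ F i) (hFanti : Antinef r N F)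
    (K : Fin s → ℚ) (hKaff : ∀ i : Fin s, r ≤ (i : ℕ) → K i = 0)
    (hKexc : ∀ i : Fin s, (i : ℕ) < r →
      (∑ j, K j * (N j i : ℚ)) + (N i i : ℚ) = -2)
    (lam' lam : ℚ) (hl0 : 0 ≤ lam') (hll : lam' < lam)
    (Dl' : Fin s → ℤ)
    (hconsec : ∀ c : ℚ, lam' ≤ c → c < lam →
      IsAntinefClosure r N (fun i => (⌊c * (F i : ℚ) - K i⌋ : ℚ)) Dl')
    (Dl : Fin s → ℤ)
    (hDl : IsAntinefClosure r N (fun i => (⌊lam * (F i : ℚ) - K i⌋ : ℚ)) Dl)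
    (hjump : Dl ≠ Dl')
    (Gl : Fin s → ℤ)
    (hGl : ∀ i, Gl i = if lam * (F i : ℚ) = K i + 1 + (Dl' i : ℚ) then 1 else 0)
    (D : Fin s → ℤ) (hDanti : Antinef r N D)
    (hlamD_le : ∀ i, lam ≤ (K i + 1 + (D i : ℚ)) / (F i : ℚ))
    (hlamD_mem : ∃ i, lam = (K i + 1 + (D i : ℚ)) / (F i : ℚ)) :
    ∀ i, lam * (F i : ℚ) = K i + 1 + (D i : ℚ) → Gl i = 1 := by
  intro i hi
  have hFi : (1 : ℚ) ≤ (F i : ℚ) := by exact_mod_cast hF1 i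
  have hFipos : (0 : ℚ) < (F i : ℚ) := by linarith
  set c : ℚ := max lam' (lam - 1 / (2 * (F i : ℚ))) with hc
  have hpos : (0 : ℚ) < 1 / (2 * (F i : ℚ)) := by positivity
  have hc1 : lam' ≤ c := le_max_left _ _
  have hc2 : c < lam := max_lt hll (by linarith)
  obtain ⟨hanti', hup', hmin'⟩ := hconsec c hc1 hc2
  -- Step A : Dl' ≤ D
  have hDle : ∀ j, Dl' j ≤ D j := by
    apply hmin' D hDanti
    intro j
    have hFj : (1 : ℚ) ≤ (F j : ℚ) := by exact_mod_cast hF1 j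
    have hFjpos : (0 : ℚ) < (F j : ℚ) := by linarith
    have h1 : lam * (F j : ℚ) ≤ K j + 1 + (D j : ℚ) :=
      (le_div_iff₀ hFjpos).mp (hlamD_le j)
    have h2 : c * (F j : ℚ) < lam * (F j : ℚ) :=
      mul_lt_mul_of_pos_right hc2 hFjpos
    have h3 : ⌊c * (F j : ℚ) - K j⌋ ≤ D j := by
      rw [Int.floor_le_iff]
      push_cast
      linarith
    show (⌊c * (F j : ℚ) - K j⌋ : ℚ) ≤ (D j : ℚ)
    exact_mod_cast h3
  -- Step B : D i ≤ Dl' i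
  have hcFi : c * (F i : ℚ) ≥ lam * (F i : ℚ) - 1 / 2 := by
    have h4 : (lam - 1 / (2 * (F i : ℚ))) ≤ c := le_max_right _ _
    have h5 : (lam - 1 / (2 * (F i : ℚ))) * (F i : ℚ) ≤ c * (F i : ℚ) :=
      mul_le_mul_of_nonneg_right h4 (le_of_lt hFipos)
    have h6 : (1 / (2 * (F i : ℚ))) * (F i : ℚ) = 1 / 2 := by
      field_simp
    nlinarith
  have hBfloor : (D i : ℚ) ≤ (⌊c * (F i : ℚ) - K i⌋ : ℚ) := by
    have : (D i : ℚ) ≤ c * (F i : ℚ) - K i := by linarith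
    exact_mod_cast Int.le_floor.mpr this
  have hDge : (D i : ℚ) ≤ (Dl' i : ℚ) := le_trans hBfloor (hup' i)
  have heq : (Dl' i : ℚ) = (D i : ℚ) := by
    have := hDle i
    have h7 : (Dl' i : ℚ) ≤ (D i : ℚ) := by exact_mod_cast this
    linarith
  rw [hGl i, if_pos]
  rw [heq]
  exact hi
end
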